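/- arXiv:1709.09331 — 6 statements merged into one kernel-verified Lean document; each statement's English description precedes it below -/
import Mathlib

section
/- Let P be a finite poset. Each order ideal toggle t_x : J(P) → J(P) is an involution (t_x ∘ t_x is the identity). Moreover, for x, y ∈ P, the toggles t_x and t_y commute (t_x ∘ t_y = t_y ∘ t_x) if and only if neither x covers y nor y covers x. -/
open scoped Classical

variable {P : Type*} [PartialOrder P]

abbrev OrderIdealSub (P : Type*) [PartialOrder P] : Type _ := {I : Set P // IsLowerSet I}

abbrev AntichainSub (P : Type*) [PartialOrder P] : Type _ := {A : Set P // IsAntichain (· ≤ ·) A}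

noncomputable def togFun (e : P) (I : OrderIdealSub P) : OrderIdealSub P :=
  if _h : e ∈ I.1 then
    if h2 : IsLowerSet (I.1 \ {e}) then ⟨I.1 \ {e}, h2⟩ else I
  else
    if h2 : IsLowerSet (insert e I.1) then ⟨insert e I.1, h2⟩ else I

noncomputable def atogFun (e : P) (A : AntichainSub P) : AntichainSub P :=
  if _h : e ∈ A.1 then ⟨A.1 \ {e}, A.2.subset Set.diff_subset⟩
  else if h2 : IsAntichain (· ≤ ·) (insert e A.1) then ⟨insert e A.1, h2⟩
  else A

def idealOf (A : AntichainSub P) : OrderIdealSub P :=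
  ⟨{x | ∃ y ∈ A.1, x ≤ y}, fun _a _b hba ha => by
    obtain ⟨y, hy, h⟩ := ha
    exact ⟨y, hy, hba.trans h⟩⟩

def listComp {α : Type*} (fs : List (α → α)) : α → α := fs.foldr (· ∘ ·) id

theorem togFun_involutive (e : P) : Function.Involutive (togFun (P := P) e) := by
  intro I
  unfold togFun
  by_cases h : e ∈ I.1
  · rw [dif_pos h]
    by_cases h2 : IsLowerSet (I.1 \ {e})
    · rw [dif_pos h2]
      have hne : e ∉ (⟨I.1 \ {e}, h2⟩ : OrderIdealSub P).1 := fun hc => hc.2 rfl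
      rw [dif_neg hne]
      have hins : insert e (I.1 \ {e}) = I.1 := by
        rw [Set.insert_diff_singleton, Set.insert_eq_self.mpr h]
      have h3 : IsLowerSet (insert e ((⟨I.1 \ {e}, h2⟩ : OrderIdealSub P)).1) := by
        show IsLowerSet (insert e (I.1 \ {e})); rw [hins]; exact I.2
      rw [dif_pos h3]
      exact Subtype.ext hins
    · rw [dif_neg h2, dif_pos h, dif_neg h2]
  · rw [dif_neg h]
    by_cases h2 : IsLowerSet (insert e I.1)
    · rw [dif_pos h2]
      have hme : e ∈ (⟨insert e I.1, h2⟩ : OrderIdealSub P).1 := Set.mem_insert e I.1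
      rw [dif_pos hme]
      have hdel : (insert e I.1) \ {e} = I.1 := by
        rw [Set.insert_sdiff_self_of_notMem h]
      have h3 : IsLowerSet ((⟨insert e I.1, h2⟩ : OrderIdealSub P).1 \ {e}) := by
        show IsLowerSet ((insert e I.1) \ {e}); rw [hdel]; exact I.2
      rw [dif_pos h3]
      exact Subtype.ext hdel
    · rw [dif_neg h2, dif_neg h, dif_neg h2]

theorem atogFun_involutive (e : P) : Function.Involutive (atogFun (P := P) e) := by
  intro A
  unfold atogFun
  by_cases h : e ∈ A.1
  · rw [dif_pos h]
    have hne : e ∉ (⟨A.1 \ {e}, A.2.subset Set.diff_subset⟩ : AntichainSub P).1 :=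
      fun hc => hc.2 rfl
    rw [dif_neg hne]
    have hins : insert e (A.1 \ {e}) = A.1 := by
      rw [Set.insert_diff_singleton, Set.insert_eq_self.mpr h]
    have h2 : IsAntichain (· ≤ ·)
        (insert e ((⟨A.1 \ {e}, A.2.subset Set.diff_subset⟩ : AntichainSub P)).1) := by
      show IsAntichain (· ≤ ·) (insert e (A.1 \ {e})); rw [hins]; exact A.2
    rw [dif_pos h2]
    exact Subtype.ext hins
  · rw [dif_neg h]
    by_cases h2 : IsAntichain (· ≤ ·) (insert e A.1)
    · rw [dif_pos h2]
      have hme : e ∈ (⟨insert e A.1, h2⟩ : AntichainSub P).1 := Set.mem_insert e A.1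
      rw [dif_pos hme]
      have hdel : (insert e A.1) \ {e} = A.1 := by
        rw [Set.insert_sdiff_self_of_notMem h]
      exact Subtype.ext hdel
    · rw [dif_neg h2, dif_neg h, dif_neg h2]

noncomputable def togPerm (e : P) : Equiv.Perm (OrderIdealSub P) :=
  (togFun_involutive e).toPerm _

noncomputable def atogPerm (e : P) : Equiv.Perm (AntichainSub P) :=
  (atogFun_involutive e).toPerm _

def IsLinExtListOn (S : Set P) (l : List P) : Prop :=
  l.Nodup ∧ (∀ x : P, x ∈ l ↔ x ∈ S) ∧
    ∀ i j : Fin l.length, l.get i < l.get j → (i : ℕ) < (j : ℕ)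

noncomputable def RowJ (I : OrderIdealSub P) : OrderIdealSub P :=
  ⟨{x | ∃ m, (m ∉ I.1 ∧ ∀ z, z ∉ I.1 → z ≤ m → z = m) ∧ x ≤ m}, fun _a _b hba ha => by
    obtain ⟨m, hm, h⟩ := ha
    exact ⟨m, hm, hba.trans h⟩⟩

noncomputable def RowA (A : AntichainSub P) : AntichainSub P :=
  ⟨{x | x ∉ (idealOf A).1 ∧ ∀ z, z ∉ (idealOf A).1 → z ≤ x → z = x}, by
    intro a ha b hb hne hab
    exact hne (hb.2 a ha.1 hab)⟩

/-- Removal condition: `x` is maximal in `S`. -/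
def Rc (x : P) (S : Set P) : Prop := ∀ a ∈ S, ¬ x < a

/-- Insertion condition: everything strictly below `x` lies in `S`. -/
def Ac (x : P) (S : Set P) : Prop := ∀ z, z < x → z ∈ S

lemma lowerDiff {S : Set P} (hS : IsLowerSet S) {x : P} (hx : x ∈ S) :
    IsLowerSet (S \ {x}) ↔ Rc x S := by
  constructor
  · intro h a ha hlt
    have hax : a ∈ S \ {x} := ⟨ha, fun he => absurd (he ▸ hlt) (lt_irrefl x)⟩
    have := h hlt.le hax
    exact this.2 rfl
  · intro h b a hba ha
    refine ⟨hS hba ha.1, fun (he : a = x) => ?_⟩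
    subst he
    exact h b ha.1 (lt_of_le_of_ne hba (fun he2 => ha.2 he2.symm))

lemma lowerIns {S : Set P} (hS : IsLowerSet S) {x : P} (hx : x ∉ S) :
    IsLowerSet (insert x S) ↔ Ac x S := by
  constructor
  · intro h z hz
    have : z ∈ insert x S := h hz.le (Set.mem_insert x S)
    rcases this with h' | h'
    · exact absurd (h' ▸ hz) (lt_irrefl x)
    · exact h'
  · intro h b a hba ha
    rcases ha with rfl | ha
    · rcases eq_or_lt_of_le hba with rfl | hlt
      · exact Set.mem_insert _ _
      · exact Set.mem_insert_of_mem _ (h a hlt)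
    · exact Set.mem_insert_of_mem _ (hS hba ha)

lemma togFun_carrier (e : P) (I : OrderIdealSub P) :
    (togFun e I).1 = if e ∈ I.1 then (if IsLowerSet (I.1 \ {e}) then I.1 \ {e} else I.1)
      else (if IsLowerSet (insert e I.1) then insert e I.1 else I.1) := by
  unfold togFun
  split_ifs <;> rfl

lemma mem_tog_ne {a e : P} (h : a ≠ e) (I : OrderIdealSub P) :
    a ∈ (togFun e I).1 ↔ a ∈ I.1 := by
  rw [togFun_carrier]
  split_ifs with h1 h2 h3
  · simp [Set.mem_diff, h]
  · rfl
  · simp [Set.mem_insert_iff, h]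
  · rfl

lemma mem_tog_self (e : P) (I : OrderIdealSub P) :
    e ∈ (togFun e I).1 ↔ (if e ∈ I.1 then ¬ Rc e I.1 else Ac e I.1) := by
  rw [togFun_carrier]
  split_ifs with h1 h2 h3
  · rw [← lowerDiff I.2 h1]
    simp [h2]
  · rw [lowerDiff I.2 h1] at h2
    simp [h1, h2]
  · rw [← lowerIns I.2 h1]
    simp [h3]
  · rw [lowerIns I.2 h1] at h3
    simp [h1, h3]

lemma Rc_tog {x y : P} (hxy : ¬ x ⋖ y) (I : OrderIdealSub P) :
    Rc x (togFun y I).1 ↔ Rc x I.1 := by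
  rw [togFun_carrier]
  split_ifs with h1 h2 h3
  · -- carrier = I.1 \ {y}, y ∈ I, removable
    constructor
    · intro h a ha hlt
      by_cases hay : a = y
      · subst hay
        obtain ⟨z, hxz, hza⟩ := (not_covBy_iff hlt).mp hxy
        exact h z ⟨I.2 hza.le ha, fun he => absurd (he ▸ hza) (lt_irrefl a)⟩ hxz
      · exact h a ⟨ha, hay⟩ hlt
    · intro h a ha hlt
      exact h a ha.1 hlt
  · rfl
  · -- carrier = insert y I.1, y ∉ I, insertable
    have hAy : Ac y I.1 := (lowerIns I.2 h1).mp h3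
    constructor
    · intro h a ha hlt
      exact h a (Set.mem_insert_of_mem _ ha) hlt
    · intro h a ha hlt
      rcases ha with rfl | ha
      · obtain ⟨z, hxz, hza⟩ := (not_covBy_iff hlt).mp hxy
        exact h z (hAy z hza) hxz
      · exact h a ha hlt
  · rfl

lemma Ac_tog {x y : P} (hyx : ¬ y ⋖ x) (I : OrderIdealSub P) :
    Ac x (togFun y I).1 ↔ Ac x I.1 := by
  rw [togFun_carrier]
  split_ifs with h1 h2 h3
  · -- carrier = I.1 \ {y}, y ∈ I, removable
    have hRy : Rc y I.1 := (lowerDiff I.2 h1).mp h2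
    constructor
    · intro h z hz
      exact (h z hz).1
    · intro h z hz
      refine ⟨h z hz, fun he => ?_⟩
      subst he
      obtain ⟨w, hzw, hwx⟩ := (not_covBy_iff hz).mp hyx
      exact hRy w (h w hwx) hzw
  · rfl
  · -- carrier = insert y I.1
    constructor
    · intro h z hz
      rcases h z hz with rfl | h'
      · obtain ⟨w, hzw, hwx⟩ := (not_covBy_iff hz).mp hyx
        rcases h w hwx with rfl | h''
        · exact absurd hzw (lt_irrefl _)
        · exact absurd (I.2 hzw.le h'') h1
      · exact h'
    · intro h z hz
      exact Set.mem_insert_of_mem _ (h z hz)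
  · rfl

lemma tog_noncomm {x y : P} (hcov : x ⋖ y) :
    togFun x ∘ togFun y ≠ togFun y ∘ togFun x := by
  intro heq
  set I : OrderIdealSub P := ⟨{z | z < y}, fun b a hba ha => lt_of_le_of_lt hba ha⟩ with hI
  have hxI : x ∈ I.1 := hcov.lt
  have hxy : x ≠ y := hcov.lt.ne
  have hyI : y ∉ I.1 := lt_irrefl y
  -- LHS : x ∈ (togFun x (togFun y I)).1
  have hAy : Ac y I.1 := fun z hz => hz
  have hyty : y ∈ (togFun y I).1 := by
    rw [mem_tog_self]
    simpa [hyI] using hAy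
  have hxty : x ∈ (togFun y I).1 := (mem_tog_ne hxy I).mpr hxI
  have hL : x ∈ (togFun x (togFun y I)).1 := by
    rw [mem_tog_self, if_pos hxty]
    intro hR
    exact hR y hyty hcov.lt
  -- RHS : x ∉ (togFun y (togFun x I)).1
  have hRx : Rc x I.1 := fun a ha hlt => hcov.2 hlt ha
  have hxtx : x ∉ (togFun x I).1 := by
    rw [mem_tog_self, if_pos hxI]
    simpa using hRx
  have hR : x ∉ (togFun y (togFun x I)).1 := by
    rw [mem_tog_ne hxy]
    exact hxtx
  have : (togFun x ∘ togFun y) I = (togFun y ∘ togFun x) I := by rw [heq]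
  rw [Subtype.ext_iff] at this
  exact hR (this ▸ hL)

/-- Each order ideal toggle is an involution, and two order ideal toggles commute
if and only if neither element covers the other. -/
theorem order_ideal_toggle_involutive_and_commute
    (P : Type*) [PartialOrder P] [Fintype P] :
    (∀ x : P, togFun x ∘ togFun x = id) ∧
    (∀ x y : P, togFun x ∘ togFun y = togFun y ∘ togFun x ↔ ¬ x ⋖ y ∧ ¬ y ⋖ x) := by
  constructor
  · intro x
    funext I
    exact togFun_involutive x I
  · intro x y
    constructor
    · intro heq
      constructor
      · intro hcov
        exact tog_noncomm hcov heq
      · intro hcov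
        exact tog_noncomm hcov heq.symm
    · rintro ⟨h1, h2⟩
      by_cases hxy : x = y
      · subst hxy; rfl
      funext I
      apply Subtype.ext
      ext a
      simp only [Function.comp_apply]
      by_cases hax : a = x
      · subst hax
        rw [mem_tog_ne hxy, mem_tog_self, mem_tog_self, mem_tog_ne hxy,
          Rc_tog h1, Ac_tog h2]
      by_cases hay : a = y
      · subst hay
        rw [mem_tog_ne (Ne.symm hxy), mem_tog_self, mem_tog_self,
          mem_tog_ne (Ne.symm hxy), Rc_tog h2, Ac_tog h1]
      · rw [mem_tog_ne hax, mem_tog_ne hay, mem_tog_ne hay, mem_tog_ne hax]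
end

section
/- Let P be a finite poset. Each antichain toggle τ_x : A(P) → A(P) is an involution. Moreover, for x, y ∈ P, the toggles τ_x and τ_y commute (τ_x ∘ τ_y = τ_y ∘ τ_x) if and only if x = y or x and y are incomparable. -/
open scoped Classical

variable {P : Type*} [PartialOrder P]

lemma atogFun_val (e : P) (A : AntichainSub P) :
    (atogFun e A).1 = if e ∈ A.1 then A.1 \ {e}
      else if IsAntichain (· ≤ ·) (insert e A.1) then insert e A.1 else A.1 := by
  unfold atogFun
  split_ifs with h1 h2 <;> rfl

lemma atogFun_commute_of_incomp {x y : P} (hxy : ¬ x ≤ y) (hyx : ¬ y ≤ x)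
    (A : AntichainSub P) : atogFun x (atogFun y A) = atogFun y (atogFun x A) := by
  have hne : x ≠ y := fun h => hxy (h ▸ le_refl x)
  apply Subtype.ext
  rw [atogFun_val, atogFun_val, atogFun_val, atogFun_val]
  set S := A.1 with hS
  have hA : IsAntichain (· ≤ ·) S := A.2
  by_cases hx : x ∈ S <;> by_cases hy : y ∈ S
  · -- both in S
    rw [if_pos hy, if_pos hx, if_pos (show x ∈ S \ {y} from ⟨hx, hne⟩),
      if_pos (show y ∈ S \ {x} from ⟨hy, hne.symm⟩)]
    ext z; simp only [Set.mem_diff, Set.mem_singleton_iff]; tauto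
  · -- x ∈ S, y ∉ S
    rw [if_pos hx, if_neg hy]
    by_cases hPy : IsAntichain (· ≤ ·) (insert y S)
    · rw [if_pos hPy, if_pos (show x ∈ insert y S from Set.mem_insert_of_mem _ hx),
        if_neg (show y ∉ S \ {x} from fun h => hy h.1),
        if_pos (hPy.subset (Set.insert_subset_insert Set.diff_subset))]
      ext z
      simp only [Set.mem_diff, Set.mem_insert_iff, Set.mem_singleton_iff]
      constructor
      · rintro ⟨h | h, h2⟩
        · exact Or.inl h
        · exact Or.inr ⟨h, h2⟩
      · rintro (h | ⟨h, h2⟩)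
        · exact ⟨Or.inl h, h ▸ hne.symm⟩
        · exact ⟨Or.inr h, h2⟩
    · rw [if_neg hPy, if_pos hx, if_neg (show y ∉ S \ {x} from fun h => hy h.1)]
      have : ¬ IsAntichain (· ≤ ·) (insert y (S \ {x})) := by
        intro h
        apply hPy
        rw [isAntichain_insert] at h ⊢
        refine ⟨hA, fun b hb hyb => ?_⟩
        by_cases hbx : b = x
        · subst hbx; exact ⟨hyx, hxy⟩
        · exact h.2 ⟨hb, hbx⟩ hyb
      rw [if_neg this]
  · -- y ∈ S, x ∉ S
    rw [if_pos hy, if_neg hx]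
    by_cases hPx : IsAntichain (· ≤ ·) (insert x S)
    · rw [if_pos hPx, if_pos (show y ∈ insert x S from Set.mem_insert_of_mem _ hy),
        if_neg (show x ∉ S \ {y} from fun h => hx h.1),
        if_pos (hPx.subset (Set.insert_subset_insert Set.diff_subset))]
      ext z
      simp only [Set.mem_diff, Set.mem_insert_iff, Set.mem_singleton_iff]
      constructor
      · rintro (h | ⟨h, h2⟩)
        · exact ⟨Or.inl h, h ▸ hne⟩
        · exact ⟨Or.inr h, h2⟩
      · rintro ⟨h | h, h2⟩
        · exact Or.inl h
        · exact Or.inr ⟨h, h2⟩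
    · rw [if_neg hPx, if_pos hy, if_neg (show x ∉ S \ {y} from fun h => hx h.1)]
      have : ¬ IsAntichain (· ≤ ·) (insert x (S \ {y})) := by
        intro h
        apply hPx
        rw [isAntichain_insert] at h ⊢
        refine ⟨hA, fun b hb hxb => ?_⟩
        by_cases hby : b = y
        · subst hby; exact ⟨hxy, hyx⟩
        · exact h.2 ⟨hb, hby⟩ hxb
      rw [if_neg this]
  · -- neither in S
    rw [if_neg hy, if_neg hx]
    have hxiy : x ∉ insert y S := by
      simp only [Set.mem_insert_iff]; rintro (h | h); exacts [hne h, hx h]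
    have hyix : y ∉ insert x S := by
      simp only [Set.mem_insert_iff]; rintro (h | h); exacts [hne.symm h, hy h]
    by_cases hPx : IsAntichain (· ≤ ·) (insert x S) <;>
      by_cases hPy : IsAntichain (· ≤ ·) (insert y S)
    · rw [if_pos hPy, if_pos hPx, if_neg hxiy, if_neg hyix]
      have hbig : IsAntichain (· ≤ ·) (insert x (insert y S)) := by
        rw [isAntichain_insert]
        refine ⟨hPy, fun b hb hxb => ?_⟩
        rcases hb with hb | hb
        · subst hb; exact ⟨hxy, hyx⟩
        · exact (isAntichain_insert.mp hPx).2 hb hxb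
      rw [if_pos hbig, if_pos (Set.insert_comm x y S ▸ hbig)]
      exact Set.insert_comm x y S
    · have hny : ¬ IsAntichain (· ≤ ·) (insert y (insert x S)) := fun h =>
        hPy (h.subset (Set.insert_subset_insert (Set.subset_insert _ _)))
      simp only [if_neg hPy, if_pos hPx, if_neg hx, if_neg hyix, if_neg hny]
    · have hnx : ¬ IsAntichain (· ≤ ·) (insert x (insert y S)) := fun h =>
        hPx (h.subset (Set.insert_subset_insert (Set.subset_insert _ _)))
      simp only [if_pos hPy, if_neg hPx, if_neg hy, if_neg hxiy, if_neg hnx]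
    · simp only [if_neg hPy, if_neg hPx, if_neg hy, if_neg hx]

lemma singleton_antichain (a : P) : IsAntichain (· ≤ ·) (insert a (∅ : Set P)) := by
  intro b hb c hc hbc
  simp only [Set.mem_insert_iff, Set.mem_empty_iff_false, or_false] at hb hc
  exact absurd (hb.trans hc.symm) hbc

lemma atogFun_ne_of_lt {x y : P} (hle : x ≤ y) (hne : x ≠ y) :
    atogFun (P := P) x ∘ atogFun y ≠ atogFun y ∘ atogFun x := by
  intro h
  set E : AntichainSub P := ⟨∅, Set.subsingleton_empty.isAntichain _⟩ with hE
  have hEv : E.1 = (∅ : Set P) := rfl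
  have hxm : x ∉ insert y (∅ : Set P) := by
    simp only [Set.mem_insert_iff, Set.mem_empty_iff_false, or_false]; exact hne
  have hym : y ∉ insert x (∅ : Set P) := by
    simp only [Set.mem_insert_iff, Set.mem_empty_iff_false, or_false]; exact hne.symm
  have hnx : ¬ IsAntichain (· ≤ ·) (insert x (insert y (∅ : Set P))) := fun h =>
    h (Set.mem_insert x _) (Set.mem_insert_of_mem _ (Set.mem_insert y ∅)) hne hle
  have hny : ¬ IsAntichain (· ≤ ·) (insert y (insert x (∅ : Set P))) := fun h =>
    h (Set.mem_insert_of_mem _ (Set.mem_insert x ∅)) (Set.mem_insert y _) hne hle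
  have h1 : (atogFun y E).1 = insert y (∅ : Set P) := by
    rw [atogFun_val, hEv, if_neg (Set.notMem_empty y), if_pos (singleton_antichain y)]
  have h2 : (atogFun x (atogFun y E)).1 = insert y (∅ : Set P) := by
    rw [atogFun_val, h1, if_neg hxm, if_neg hnx]
  have h3 : (atogFun x E).1 = insert x (∅ : Set P) := by
    rw [atogFun_val, hEv, if_neg (Set.notMem_empty x), if_pos (singleton_antichain x)]
  have h4 : (atogFun y (atogFun x E)).1 = insert x (∅ : Set P) := by
    rw [atogFun_val, h3, if_neg hym, if_neg hny]
  have heq : insert y (∅ : Set P) = insert x (∅ : Set P) := by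
    rw [← h2, ← h4]
    exact congrArg Subtype.val (congrFun h E)
  have : y ∈ insert x (∅ : Set P) := heq ▸ Set.mem_insert y ∅
  exact hym this

/-- Each antichain toggle is an involution, and two antichain toggles commute
if and only if the two elements are equal or incomparable. -/
theorem antichain_toggle_involutive_and_commute
    (P : Type*) [PartialOrder P] [Fintype P] :
    (∀ x : P, atogFun x ∘ atogFun x = id) ∧
    (∀ x y : P, atogFun x ∘ atogFun y = atogFun y ∘ atogFun x ↔
      x = y ∨ (¬ x ≤ y ∧ ¬ y ≤ x)) := by
  constructor
  · intro x
    funext A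
    exact atogFun_involutive x A
  · intro x y
    constructor
    · intro h
      by_contra hc
      push_neg at hc
      obtain ⟨hne, hcomp⟩ := hc
      by_cases hle : x ≤ y
      · exact atogFun_ne_of_lt hle hne h
      · exact atogFun_ne_of_lt (hcomp hle) hne.symm h.symm
    · rintro (rfl | ⟨hxy, hyx⟩)
      · rfl
      · funext A
        exact atogFun_commute_of_incomp hxy hyx A
end

section
/- Let P be a finite poset, e ∈ P, and let e_1, …, e_k be the elements covered by e. Define t_e^* := τ_{e_1} ∘ ⋯ ∘ τ_{e_k} ∘ τ_e ∘ τ_{e_1} ∘ ⋯ ∘ τ_{e_k} (this is well-defined since the τ_{e_i} pairwise commute). Then for every order ideal I ∈ J(P) with A the antichain of maximal elements of I, the antichain of maximal elements of t_e(I) equals t_e^*(A). Equivalently, I ∘ t_e^* = t_e ∘ I as maps A(P) → J(P), where I : A(P) → J(P) is the bijection sending an antichain to the order ideal it generates. -/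
open scoped Classical

variable {P : Type*} [PartialOrder P]

section AuxLemmas

variable {P : Type*} [PartialOrder P]

lemma atog_spec_mem (e : P) (A : AntichainSub P) (h : e ∈ A.1) :
    (atogFun e A).1 = A.1 \ {e} := by
  unfold atogFun; rw [dif_pos h]

lemma atog_spec_add (e : P) (A : AntichainSub P) (h : e ∉ A.1)
    (h2 : IsAntichain (· ≤ ·) (insert e A.1)) :
    (atogFun e A).1 = insert e A.1 := by
  unfold atogFun; rw [dif_neg h, dif_pos h2]

lemma atog_spec_fix (e : P) (A : AntichainSub P) (h : e ∉ A.1)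
    (h2 : ¬ IsAntichain (· ≤ ·) (insert e A.1)) :
    atogFun e A = A := by
  unfold atogFun; rw [dif_neg h, dif_neg h2]

lemma tog_spec_rem (e : P) (I : OrderIdealSub P) (h : e ∈ I.1)
    (h2 : IsLowerSet (I.1 \ {e})) : (togFun e I).1 = I.1 \ {e} := by
  unfold togFun; rw [dif_pos h, dif_pos h2]

lemma tog_spec_fix1 (e : P) (I : OrderIdealSub P) (h : e ∈ I.1)
    (h2 : ¬ IsLowerSet (I.1 \ {e})) : togFun e I = I := by
  unfold togFun; rw [dif_pos h, dif_neg h2]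

lemma tog_spec_add (e : P) (I : OrderIdealSub P) (h : e ∉ I.1)
    (h2 : IsLowerSet (insert e I.1)) : (togFun e I).1 = insert e I.1 := by
  unfold togFun; rw [dif_neg h, dif_pos h2]

lemma tog_spec_fix2 (e : P) (I : OrderIdealSub P) (h : e ∉ I.1)
    (h2 : ¬ IsLowerSet (insert e I.1)) : togFun e I = I := by
  unfold togFun; rw [dif_neg h, dif_neg h2]

lemma exists_le_cov [Fintype P] {x e : P} (h : x < e) : ∃ c, x ≤ c ∧ c ⋖ e := by
  classical
  obtain ⟨m, hm, hmax⟩ := Finset.exists_maximal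
    (s := Finset.univ.filter fun z => x ≤ z ∧ z < e) ⟨x, by simp [h]⟩
  simp only [Finset.mem_filter, Finset.mem_univ, true_and] at hm
  refine ⟨m, hm.1, hm.2, fun z hz hz' => ?_⟩
  have hzmem : z ∈ Finset.filter (fun z => x ≤ z ∧ z < e) Finset.univ := by
    simp only [Finset.mem_filter, Finset.mem_univ, true_and]
    exact ⟨hm.1.trans hz.le, hz'⟩
  exact absurd (hmax hzmem hz.le) (not_le_of_gt hz)

lemma pass_spec (l : List P) (hinc : ∀ a ∈ l, ∀ b ∈ l, a ≠ b → ¬ a ≤ b)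
    (hnd : l.Nodup) (A : AntichainSub P) :
    (listComp (l.map atogFun) A).1
      = (A.1 \ {x | x ∈ l}) ∪ {c | c ∈ l ∧ ∀ a ∈ A.1, ¬ c ≤ a ∧ ¬ a ≤ c} := by
  revert hinc hnd
  induction l with
  | nil =>
    intro _ _
    simp [listComp]
  | cons c l ih =>
    intro hinc hnd
    have hcl : c ∉ l := (List.nodup_cons.mp hnd).1
    have hinc' : ∀ a ∈ l, ∀ b ∈ l, a ≠ b → ¬ a ≤ b := fun a ha b hb =>
      hinc a (List.mem_cons_of_mem c ha) b (List.mem_cons_of_mem c hb)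
    have hR := ih hinc' (List.nodup_cons.mp hnd).2
    set R := listComp (l.map atogFun) A with hRdef
    have hstep : listComp ((c :: l).map atogFun) A = atogFun c R := rfl
    by_cases hc : c ∈ A.1
    · have hcR : c ∈ R.1 := by
        rw [hR]; exact Or.inl ⟨hc, hcl⟩
      rw [hstep, atog_spec_mem c R hcR, hR]
      ext x
      simp only [Set.mem_diff, Set.mem_union, Set.mem_setOf_eq, Set.mem_singleton_iff]
      constructor
      · rintro ⟨h1 | h2, hxc⟩
        · exact Or.inl ⟨h1.1, fun h => (List.mem_cons.mp h).elim hxc h1.2⟩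
        · exact Or.inr ⟨List.mem_cons_of_mem c h2.1, h2.2⟩
      · rintro (⟨hxA, hx⟩ | ⟨hx1, hx2⟩)
        · have hxc : x ≠ c := fun h => hx (List.mem_cons.mpr (Or.inl h))
          exact ⟨Or.inl ⟨hxA, fun h => hx (List.mem_cons_of_mem c h)⟩, hxc⟩
        · have hxl : x ∈ l := by
            rcases List.mem_cons.mp hx1 with h | h
            · exact absurd (le_of_eq h) (hx2 c hc).1
            · exact h
          have hxc : x ≠ c := fun h => hcl (h ▸ hxl)
          exact ⟨Or.inr ⟨hxl, hx2⟩, hxc⟩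
    · have hcR : c ∉ R.1 := by
        rw [hR]
        rintro (⟨h, _⟩ | ⟨h, _⟩)
        · exact hc h
        · exact hcl h
      by_cases hcond : ∀ a ∈ A.1, ¬ c ≤ a ∧ ¬ a ≤ c
      · have hanti : IsAntichain (· ≤ ·) (insert c R.1) := by
          refine R.2.insert ?_ ?_
          · intro b hb hne
            rw [hR] at hb
            rcases hb with ⟨hbA, _⟩ | ⟨hbl, _⟩
            · exact (hcond b hbA).2
            · exact hinc b (List.mem_cons_of_mem c hbl) c (List.mem_cons_self)
                (fun h => hcl (h ▸ hbl)) 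
          · intro b hb hne
            rw [hR] at hb
            rcases hb with ⟨hbA, _⟩ | ⟨hbl, _⟩
            · exact (hcond b hbA).1
            · exact hinc c (List.mem_cons_self) b (List.mem_cons_of_mem c hbl)
                (fun h => hcl (h ▸ hbl))
        rw [hstep, atog_spec_add c R hcR hanti, hR]
        ext x
        simp only [Set.mem_insert_iff, Set.mem_union, Set.mem_diff, Set.mem_setOf_eq]
        constructor
        · rintro (rfl | ⟨hA, hl'⟩ | ⟨hl', hcnd⟩)
          · exact Or.inr ⟨List.mem_cons_self, hcond⟩
          · exact Or.inl ⟨hA, fun h => (List.mem_cons.mp h).elim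
              (fun he => hc (he ▸ hA)) hl'⟩
          · exact Or.inr ⟨List.mem_cons_of_mem c hl', hcnd⟩
        · rintro (⟨hA, h⟩ | ⟨h1, h2⟩)
          · exact Or.inr (Or.inl ⟨hA, fun hh => h (List.mem_cons_of_mem c hh)⟩)
          · rcases List.mem_cons.mp h1 with rfl | hl'
            · exact Or.inl rfl
            · exact Or.inr (Or.inr ⟨hl', h2⟩)
      · have hex : ∃ a ∈ A.1, c ≤ a ∨ a ≤ c := by
          by_contra hno
          push_neg at hno
          exact hcond fun a ha => ⟨(hno a ha).1, (hno a ha).2⟩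
        obtain ⟨a, haA, hcab⟩ := hex
        have hne : a ≠ c := fun h => hc (h ▸ haA)
        have haR : a ∈ R.1 := by
          rw [hR]
          left
          refine ⟨haA, fun hal => ?_⟩
          rcases hcab with h | h
          · exact hinc c (List.mem_cons_self) a (List.mem_cons_of_mem c hal) hne.symm h
          · exact hinc a (List.mem_cons_of_mem c hal) c (List.mem_cons_self) hne h
        have hnanti : ¬ IsAntichain (· ≤ ·) (insert c R.1) := by
          intro h
          rcases hcab with hle | hle
          · exact h (Set.mem_insert c R.1) (Set.mem_insert_of_mem c haR) hne.symm hle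
          · exact h (Set.mem_insert_of_mem c haR) (Set.mem_insert c R.1) hne hle
        rw [hstep, atog_spec_fix c R hcR hnanti, hR]
        ext x
        simp only [Set.mem_union, Set.mem_diff, Set.mem_setOf_eq]
        constructor
        · rintro (⟨hA, hl'⟩ | ⟨hl', hcnd⟩)
          · refine Or.inl ⟨hA, fun h => ?_⟩
            rcases List.mem_cons.mp h with rfl | h'
            · exact hc hA
            · exact hl' h'
          · exact Or.inr ⟨List.mem_cons_of_mem c hl', hcnd⟩
        · rintro (⟨hA, h⟩ | ⟨h1, h2⟩)
          · exact Or.inl ⟨hA, fun hh => h (List.mem_cons_of_mem c hh)⟩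
          · rcases List.mem_cons.mp h1 with rfl | hl'
            · exact absurd h2 hcond
            · exact Or.inr ⟨hl', h2⟩

end AuxLemmas

/-- For `e ∈ P` with covered elements `e_1, …, e_k`, and
`t_e^* = τ_{e_1} ⋯ τ_{e_k} τ_e τ_{e_1} ⋯ τ_{e_k}`, the order ideal generated by `t_e^*(A)`
is `t_e` applied to the order ideal generated by `A`; i.e. `I ∘ t_e^* = t_e ∘ I`. -/
theorem ideal_of_tStar_eq_toggle_ideal
    (P : Type*) [PartialOrder P] [Fintype P] (e : P) (l : List P)
    (hnd : l.Nodup) (hmem : ∀ x : P, x ∈ l ↔ x ⋖ e) (A : AntichainSub P) :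
    idealOf ((listComp (l.map atogFun) ∘ atogFun e ∘ listComp (l.map atogFun)) A)
      = togFun e (idealOf A) := by
  classical
  have hinc : ∀ a ∈ l, ∀ b ∈ l, a ≠ b → ¬ a ≤ b := by
    intro a ha b hb hne hab
    exact ((hmem a).1 ha).2 (lt_of_le_of_ne hab hne) ((hmem b).1 hb).1
  have hel : e ∉ l := fun h => lt_irrefl e ((hmem e).1 h).1
  simp only [Function.comp_apply]
  set B1 := listComp (l.map atogFun) A with hB1def
  have hB1 : B1.1 = (A.1 \ {x | x ∈ l}) ∪ {c | c ∈ l ∧ ∀ a ∈ A.1, ¬ c ≤ a ∧ ¬ a ≤ c} :=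
    pass_spec l hinc hnd A
  set B2 := atogFun e B1 with hB2def
  set B3 := listComp (l.map atogFun) B2 with hB3def
  have hB3 : B3.1 = (B2.1 \ {x | x ∈ l}) ∪ {c | c ∈ l ∧ ∀ a ∈ B2.1, ¬ c ≤ a ∧ ¬ a ≤ c} :=
    pass_spec l hinc hnd B2
  by_cases he : e ∈ A.1
  · -- Case 1 : e is in the antichain A
    have heI : e ∈ (idealOf A).1 := ⟨e, he, le_rfl⟩
    have hlow : IsLowerSet ((idealOf A).1 \ {e}) := by
      intro a b hba ha
      obtain ⟨⟨y, hy, hay⟩, hane⟩ := ha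
      refine ⟨⟨y, hy, hba.trans hay⟩, fun hbe => ?_⟩
      have hbe' : b = e := hbe
      have heay : e ≤ y := hbe' ▸ (hba.trans hay)
      rcases eq_or_ne e y with heq | hne
      · have h1 : a ≤ e := heq ▸ hay
        have h2 : e ≤ a := hbe' ▸ hba
        exact hane (le_antisymm h1 h2)
      · exact A.2 he hy hne heay
    have hACempty : ∀ c ∈ l, c ∉ A.1 := by
      intro c hc hcA
      have hce := ((hmem c).1 hc).1
      exact A.2 hcA he (ne_of_lt hce) hce.le
    have hB1' : B1.1 = A.1 := by
      rw [hB1]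
      have hS1 : {c | c ∈ l ∧ ∀ a ∈ A.1, ¬ c ≤ a ∧ ¬ a ≤ c} = (∅ : Set P) := by
        ext c
        simp only [Set.mem_setOf_eq, Set.mem_empty_iff_false, iff_false, not_and]
        intro hcl hcond
        exact (hcond e he).1 ((hmem c).1 hcl).1.le
      rw [hS1, Set.union_empty]
      ext x
      exact ⟨fun h => h.1, fun h => ⟨h, fun hxC => hACempty x hxC h⟩⟩
    have heB1 : e ∈ B1.1 := by rw [hB1']; exact he
    have hB2' : B2.1 = A.1 \ {e} := by
      rw [hB2def, atog_spec_mem e B1 heB1, hB1']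
    have hB3' : B3.1 = (A.1 \ {e}) ∪ {c | c ∈ l ∧ ∀ a ∈ A.1 \ {e}, ¬ c ≤ a ∧ ¬ a ≤ c} := by
      rw [hB3, hB2']
      congr 1
      ext x
      exact ⟨fun h => h.1, fun h => ⟨h, fun hxC => hACempty x hxC h.1⟩⟩
    apply Subtype.ext
    rw [tog_spec_rem e (idealOf A) heI hlow]
    show {x | ∃ y ∈ B3.1, x ≤ y} = (idealOf A).1 \ {e}
    rw [hB3']
    ext x
    constructor
    · rintro ⟨y, hy | hy, hxy⟩
      · refine ⟨⟨y, hy.1, hxy⟩, fun hxe => ?_⟩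
        have hxe' : x = e := hxe
        have hey : e ≤ y := hxe' ▸ hxy
        rcases eq_or_ne e y with heq | hne
        · exact hy.2 heq.symm
        · exact A.2 he hy.1 hne hey
      · have hye : y < e := ((hmem y).1 hy.1).1
        refine ⟨⟨e, he, hxy.trans hye.le⟩, fun hxe => ?_⟩
        have hxe' : x = e := hxe
        exact lt_irrefl e (lt_of_le_of_lt (hxe' ▸ hxy) hye)
    · rintro ⟨⟨y, hyA, hxy⟩, hxe⟩
      have hxe' : x ≠ e := hxe
      rcases eq_or_ne y e with heq | hyne
      · obtain ⟨c, hxc, hce⟩ := exists_le_cov (lt_of_le_of_ne (heq ▸ hxy) hxe')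
        have hcl : c ∈ l := (hmem c).2 hce
        by_cases hcS : ∀ a ∈ A.1 \ {e}, ¬ c ≤ a ∧ ¬ a ≤ c
        · exact ⟨c, Or.inr ⟨hcl, hcS⟩, hxc⟩
        · have hex2 : ∃ a, (a ∈ A.1 ∧ a ≠ e) ∧ (c ≤ a ∨ a ≤ c) := by
            by_contra hno
            push_neg at hno
            refine hcS fun a ha => ?_
            have := hno a ⟨ha.1, ha.2⟩
            exact ⟨this.1, this.2⟩
          obtain ⟨a, ⟨haA, hane⟩, hor⟩ := hex2
          rcases hor with h | h
          · exact ⟨a, Or.inl ⟨haA, fun hm => hane hm⟩, hxc.trans h⟩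
          · exact absurd (h.trans hce.1.le) (A.2 haA he hane)
      · exact ⟨y, Or.inl ⟨hyA, fun hm => hyne hm⟩, hxy⟩
  · by_cases heI : ∃ y ∈ A.1, e ≤ y
    · -- Case 2 : e in the ideal, not maximal
      obtain ⟨a0, ha0, hea0⟩ := heI
      have hea0' : e < a0 := lt_of_le_of_ne hea0 (fun h => he (h ▸ ha0))
      have key : (A.1 \ {x | x ∈ l}) ∪ {c | c ∈ l ∧ ∀ a ∈ A.1, ¬ c ≤ a ∧ ¬ a ≤ c}
          = A.1 := by
        ext x
        constructor
        · rintro (⟨hx, _⟩ | ⟨hxl, hcond⟩)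
          · exact hx
          · exact absurd (((hmem x).1 hxl).1.trans hea0').le (hcond a0 ha0).1
        · intro hx
          left
          refine ⟨hx, fun hxC => ?_⟩
          have hxe : x < e := ((hmem x).1 hxC).1
          exact A.2 hx ha0 (ne_of_lt (hxe.trans hea0')) (hxe.trans hea0').le
      have hB1' : B1.1 = A.1 := by rw [hB1]; exact key
      have heB1 : e ∉ B1.1 := by rw [hB1']; exact he
      have hnb : ¬ IsAntichain (· ≤ ·) (insert e B1.1) := by
        rw [hB1']
        intro h
        exact h (Set.mem_insert e A.1) (Set.mem_insert_of_mem e ha0)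
          (fun hh => he (hh ▸ ha0)) hea0
      have hB2' : B2 = B1 := by rw [hB2def]; exact atog_spec_fix e B1 heB1 hnb
      have hB3' : B3.1 = A.1 := by rw [hB3, hB2', hB1']; exact key
      have hB3A : B3 = A := Subtype.ext hB3'
      have hnl : ¬ IsLowerSet ((idealOf A).1 \ {e}) := by
        intro h
        have hm : a0 ∈ (idealOf A).1 \ {e} :=
          ⟨⟨a0, ha0, le_rfl⟩, fun hm => ne_of_lt hea0' hm.symm⟩
        exact (h hea0 hm).2 rfl
      rw [hB3A, tog_spec_fix1 e (idealOf A) ⟨a0, ha0, hea0⟩ hnl]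
    · by_cases hall : ∀ c ∈ l, ∃ a ∈ A.1, c ≤ a
      · -- Case 3 : e not in ideal, all covers in ideal
        have hS1 : {c | c ∈ l ∧ ∀ a ∈ A.1, ¬ c ≤ a ∧ ¬ a ≤ c} = (∅ : Set P) := by
          ext c
          simp only [Set.mem_setOf_eq, Set.mem_empty_iff_false, iff_false, not_and]
          intro hcl hcond
          obtain ⟨a, ha, hca⟩ := hall c hcl
          exact (hcond a ha).1 hca
        have hB1' : B1.1 = A.1 \ {x | x ∈ l} := by
          rw [hB1, hS1, Set.union_empty]
        have heB1 : e ∉ B1.1 := by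
          rw [hB1']
          exact fun h => he h.1
        have hanti : IsAntichain (· ≤ ·) (insert e B1.1) := by
          rw [hB1']
          refine (A.2.subset Set.diff_subset).insert ?_ ?_
          · intro b hb hne hble
            have hblt : b < e := lt_of_le_of_ne hble (fun h => hne h.symm)
            obtain ⟨c, hbc, hce⟩ := exists_le_cov hblt
            have hcl : c ∈ l := (hmem c).2 hce
            obtain ⟨a, haA, hca⟩ := hall c hcl
            have hba : b = a := by
              by_contra hne2
              exact A.2 hb.1 haA hne2 (hbc.trans hca)
            have hcb : c = b := le_antisymm (hba ▸ hca) hbc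
            exact hb.2 (hcb ▸ hcl)
          · intro b hb hne hebe
            exact heI ⟨b, hb.1, hebe⟩
        have hB2' : B2.1 = insert e (A.1 \ {x | x ∈ l}) := by
          rw [hB2def, atog_spec_add e B1 heB1 hanti, hB1']
        have hB3' : B3.1 = insert e (A.1 \ {x | x ∈ l}) := by
          rw [hB3, hB2']
          have h1 : insert e (A.1 \ {x | x ∈ l}) \ {x | x ∈ l}
              = insert e (A.1 \ {x | x ∈ l}) := by
            ext x
            refine ⟨fun h => h.1, fun h => ⟨h, fun hxC => ?_⟩⟩
            have hxe : x < e := ((hmem x).1 hxC).1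
            rcases h with rfl | hmem'
            · exact lt_irrefl x hxe
            · exact hmem'.2 hxC
          have h2 : {c | c ∈ l ∧ ∀ a ∈ insert e (A.1 \ {x | x ∈ l}), ¬ c ≤ a ∧ ¬ a ≤ c}
              = (∅ : Set P) := by
            ext c
            simp only [Set.mem_setOf_eq, Set.mem_empty_iff_false, iff_false, not_and]
            intro hcl hcond
            exact (hcond e (Set.mem_insert e _)).1 ((hmem c).1 hcl).1.le
          rw [h1, h2, Set.union_empty]
        have hlow : IsLowerSet (insert e (idealOf A).1) := by
          intro a b hba ha
          rcases ha with rfl | ⟨y, hy, hay⟩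
          · rcases eq_or_lt_of_le hba with rfl | hblt
            · exact Set.mem_insert _ _
            · obtain ⟨c, hbc, hce⟩ := exists_le_cov hblt
              obtain ⟨a', ha', hca'⟩ := hall c ((hmem c).2 hce)
              exact Set.mem_insert_of_mem _ ⟨a', ha', hbc.trans hca'⟩
          · exact Set.mem_insert_of_mem _ ⟨y, hy, hba.trans hay⟩
        apply Subtype.ext
        rw [tog_spec_add e (idealOf A) heI hlow]
        show {x | ∃ y ∈ B3.1, x ≤ y} = insert e (idealOf A).1
        rw [hB3']
        ext x
        constructor
        · rintro ⟨y, hy, hxy⟩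
          rcases hy with rfl | ⟨hyA, _⟩
          · rcases eq_or_lt_of_le hxy with rfl | hlt
            · exact Set.mem_insert _ _
            · obtain ⟨c, hxc, hce⟩ := exists_le_cov hlt
              obtain ⟨a', ha', hca'⟩ := hall c ((hmem c).2 hce)
              exact Set.mem_insert_of_mem _ ⟨a', ha', hxc.trans hca'⟩
          · exact Set.mem_insert_of_mem _ ⟨y, hyA, hxy⟩
        · rintro (rfl | ⟨y, hy, hxy⟩)
          · exact ⟨_, Set.mem_insert _ _, le_rfl⟩
          · by_cases hyC : y ∈ l
            · exact ⟨e, Set.mem_insert e _, hxy.trans ((hmem y).1 hyC).1.le⟩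
            · exact ⟨y, Set.mem_insert_of_mem _ ⟨hy, hyC⟩, hxy⟩
      · -- Case 4 : e not in ideal, some cover not in ideal
        push_neg at hall
        obtain ⟨c0, hc0l, hc0na⟩ := hall
        have hc0lt : c0 < e := ((hmem c0).1 hc0l).1
        have heB1 : e ∉ B1.1 := by
          rw [hB1]
          rintro (⟨h, _⟩ | ⟨h, _⟩)
          · exact he h
          · exact hel h
        have hnanti : ¬ IsAntichain (· ≤ ·) (insert e B1.1) := by
          intro hanti
          by_cases hac : ∃ a ∈ A.1, a ≤ c0
          · obtain ⟨a, haA, hac0⟩ := hac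
            have haC : a ∉ l := by
              intro haC'
              have hac0' : a = c0 := by
                by_contra hne
                exact hinc a haC' c0 hc0l hne hac0
              exact hc0na c0 (hac0' ▸ haA) le_rfl
            have haB1 : a ∈ B1.1 := by
              rw [hB1]; exact Or.inl ⟨haA, haC⟩
            exact hanti (Set.mem_insert_of_mem _ haB1) (Set.mem_insert _ _)
              (fun h => he (h ▸ haA)) (hac0.trans hc0lt.le)
          · push_neg at hac
            have hc0B1 : c0 ∈ B1.1 := by
              rw [hB1]
              exact Or.inr ⟨hc0l, fun a ha => ⟨hc0na a ha, hac a ha⟩⟩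
            exact hanti (Set.mem_insert_of_mem _ hc0B1) (Set.mem_insert _ _)
              (ne_of_lt hc0lt) hc0lt.le
        have hB2' : B2 = B1 := by rw [hB2def]; exact atog_spec_fix e B1 heB1 hnanti
        have hB3' : B3.1 = A.1 := by
          rw [hB3, hB2', hB1]
          ext x
          constructor
          · rintro (⟨hx, hxC⟩ | ⟨hxl, hcond⟩)
            · rcases hx with ⟨hxA, _⟩ | ⟨hxl', _⟩
              · exact hxA
              · exact absurd hxl' hxC
            · by_contra hxA
              by_cases hxS : ∀ a ∈ A.1, ¬ x ≤ a ∧ ¬ a ≤ x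
              · exact (hcond x (Or.inr ⟨hxl, hxS⟩)).1 le_rfl
              · have hex2 : ∃ a ∈ A.1, x ≤ a ∨ a ≤ x := by
                  by_contra hno
                  push_neg at hno
                  exact hxS fun a ha => ⟨(hno a ha).1, (hno a ha).2⟩
                obtain ⟨a, haA, hor⟩ := hex2
                have haC : a ∉ l := by
                  intro haC'
                  have hax : a = x := by
                    by_contra hne
                    rcases hor with h | h
                    · exact hinc x hxl a haC' (fun hh => hne hh.symm) h
                    · exact hinc a haC' x hxl hne h
                  exact hxA (hax ▸ haA)
                have hcond' := hcond a (Or.inl ⟨haA, haC⟩)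
                rcases hor with h | h
                · exact hcond'.1 h
                · exact hcond'.2 h
          · intro hxA
            by_cases hxC : x ∈ l
            · right
              refine ⟨hxC, fun a ha => ?_⟩
              rcases ha with ⟨haA, haC⟩ | ⟨hal, hcond⟩
              · have hne : x ≠ a := fun h => haC (h ▸ hxC)
                exact ⟨A.2 hxA haA hne, A.2 haA hxA (Ne.symm hne)⟩
              · have hne : x ≠ a := by
                  rintro rfl
                  exact (hcond x hxA).1 le_rfl
                exact ⟨hinc x hxC a hal hne, hinc a hal x hxC (Ne.symm hne)⟩
            · exact Or.inl ⟨Or.inl ⟨hxA, hxC⟩, hxC⟩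
        have hB3A : B3 = A := Subtype.ext hB3'
        have hnl : ¬ IsLowerSet (insert e (idealOf A).1) := by
          intro h
          rcases h hc0lt.le (Set.mem_insert e _) with h' | h'
          · exact ne_of_lt hc0lt h'
          · obtain ⟨a, ha, hc0a⟩ := h'
            exact hc0na a ha hc0a
        rw [hB3A, tog_spec_fix2 e (idealOf A) heI hnl]
end

section
/- Let P be a finite poset and e ∈ P. Define η_e := t_{x_1} ∘ t_{x_2} ∘ ⋯ ∘ t_{x_k} where (x_1, …, x_k) is any linear extension of the subposet {x ∈ P | x < e} (this is independent of the choice of linear extension), and define τ_e^* := η_e ∘ t_e ∘ η_e^{-1}. Then for every antichain A ∈ A(P), the order ideal generated by τ_e(A) equals τ_e^*(I(A)). Equivalently, I ∘ τ_e = τ_e^* ∘ I as maps A(P) → J(P). -/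
open scoped Classical

variable {P : Type*} [PartialOrder P]

noncomputable def etaJPerm {P : Type*} [PartialOrder P] (l : List P) :
    Equiv.Perm (OrderIdealSub P) := (l.map togPerm).prod

section Aux

variable {P : Type*} [PartialOrder P]

theorem togFun_remove {e : P} {I : OrderIdealSub P} (h1 : e ∈ I.1)
    (h2 : IsLowerSet (I.1 \ {e})) : togFun e I = ⟨I.1 \ {e}, h2⟩ := by
  unfold togFun; rw [dif_pos h1, dif_pos h2]

theorem togFun_remove_fail {e : P} {I : OrderIdealSub P} (h1 : e ∈ I.1)
    (h2 : ¬ IsLowerSet (I.1 \ {e})) : togFun e I = I := by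
  unfold togFun; rw [dif_pos h1, dif_neg h2]

theorem togFun_insert {e : P} {I : OrderIdealSub P} (h1 : e ∉ I.1)
    (h2 : IsLowerSet (insert e I.1)) : togFun e I = ⟨insert e I.1, h2⟩ := by
  unfold togFun; rw [dif_neg h1, dif_pos h2]

theorem togFun_insert_fail {e : P} {I : OrderIdealSub P} (h1 : e ∉ I.1)
    (h2 : ¬ IsLowerSet (insert e I.1)) : togFun e I = I := by
  unfold togFun; rw [dif_neg h1, dif_neg h2]

/-- The intermediate ideal after toggling (bottom-up) the elements of a
lower set `Q ⊆ {x | x < e}` starting from `idealOf A`. -/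
def MSet (e : P) (Q : Set P) (A : AntichainSub P) : Set P :=
  {x | (x ∉ Q ∧ ∃ a ∈ A.1, x ≤ a) ∨ (x ∈ Q ∧ ∀ a ∈ A.1, a < e → ¬ a ≤ x)}

theorem MSet_lower (e : P) {Q : Set P} (hQ : IsLowerSet Q) (A : AntichainSub P) :
    IsLowerSet (MSet e Q A) := by
  intro x y hyx hx
  rcases hx with ⟨hxQ, a, ha, hxa⟩ | ⟨hxQ, h⟩
  · by_cases hyQ : y ∈ Q
    · right
      refine ⟨hyQ, fun b hb _hbe hby => ?_⟩
      have hba : b ≤ a := hby.trans (hyx.trans hxa)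
      have hbaeq : b = a := by
        by_contra hne; exact A.2 hb ha hne hba
      subst hbaeq
      have hxb : x = b := le_antisymm hxa (hby.trans hyx)
      exact hxQ (hxb ▸ hQ hby hyQ)
    · exact Or.inl ⟨hyQ, a, ha, hyx.trans hxa⟩
  · exact Or.inr ⟨hQ hyx hxQ, fun b hb hbe hby => h b hb hbe (hby.trans hyx)⟩

theorem MSet_mem_iff_of_ne {e x : P} {Q : Set P} {A : AntichainSub P} {z : P}
    (hz : z ≠ x) : z ∈ MSet e (insert x Q) A ↔ z ∈ MSet e Q A := by
  simp only [MSet, Set.mem_setOf_eq, Set.mem_insert_iff, hz, false_or]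

theorem insert_lower {x : P} {Q : Set P} (hQ : IsLowerSet Q)
    (hpre : ∀ y, y < x → y ∈ Q) : IsLowerSet (insert x Q) := by
  intro a b hba hb
  rcases hb with rfl | hb
  · rcases eq_or_lt_of_le hba with rfl | h
    · exact Set.mem_insert _ _
    · exact Set.mem_insert_of_mem _ (hpre _ h)
  · exact Set.mem_insert_of_mem _ (hQ hba hb)

/-- Key step: toggling a new minimal element `x` of the unprocessed part. -/
theorem tog_step (e x : P) {Q : Set P} (hQ : IsLowerSet Q) (A : AntichainSub P)
    (hxQ : x ∉ Q) (hxe : x < e) (hpre : ∀ y, y < x → y ∈ Q) :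
    togFun x (⟨MSet e Q A, MSet_lower e hQ A⟩ : OrderIdealSub P)
      = ⟨MSet e (insert x Q) A, MSet_lower e (insert_lower hQ hpre) A⟩ := by
  by_cases hin : ∃ a ∈ A.1, x ≤ a
  · have hxM : x ∈ MSet e Q A := Or.inl ⟨hxQ, hin⟩
    by_cases hrem : ∃ a ∈ A.1, a < e ∧ a ≤ x
    · -- removal succeeds
      have hsub : MSet e Q A \ {x} = MSet e (insert x Q) A := by
        ext z
        by_cases hz : z = x
        · subst hz
          simp only [Set.mem_diff, Set.mem_singleton_iff, not_true, and_false,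
            false_iff]
          intro hmem
          rcases hmem with ⟨hnQ, _⟩ | ⟨_, hall⟩
          · exact hnQ (Set.mem_insert _ _)
          · obtain ⟨a, ha, hae, hax⟩ := hrem
            exact hall a ha hae hax
        · simp only [Set.mem_diff, Set.mem_singleton_iff, hz, not_false_iff,
            and_true, MSet_mem_iff_of_ne hz]
      have hlow : IsLowerSet (MSet e Q A \ {x}) := by
        rw [hsub]; exact MSet_lower e (insert_lower hQ hpre) A
      rw [togFun_remove hxM hlow]
      exact Subtype.ext hsub
    · -- removal fails
      obtain ⟨a, ha, hxa⟩ := hin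
      have hne : x ≠ a := by
        rintro rfl; exact hrem ⟨x, ha, hxe, le_rfl⟩
      have haQ : a ∉ Q := fun h => hxQ (hQ hxa h)
      have haM : a ∈ MSet e Q A := Or.inl ⟨haQ, a, ha, le_rfl⟩
      have hnl : ¬ IsLowerSet (MSet e Q A \ {x}) := fun hl =>
        (hl hxa ⟨haM, fun h => hne h.symm⟩).2 rfl
      rw [togFun_remove_fail hxM hnl]
      refine Subtype.ext ?_
      ext z
      by_cases hz : z = x
      · subst hz
        simp only [Set.mem_setOf_eq]
        constructor
        · intro _; exact Or.inr ⟨Set.mem_insert _ _,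
            fun b hb hbe hbx => hrem ⟨b, hb, hbe, hbx⟩⟩
        · intro _; exact hxM
      · exact (MSet_mem_iff_of_ne hz).symm
  · have hxM : x ∉ MSet e Q A := by
      intro h
      rcases h with ⟨_, hi⟩ | ⟨hQ', _⟩
      · exact hin hi
      · exact hxQ hQ'
    by_cases hcond : ∀ a ∈ A.1, a < e → ¬ a ≤ x
    · -- insertion succeeds
      have hsub : insert x (MSet e Q A) = MSet e (insert x Q) A := by
        ext z
        by_cases hz : z = x
        · subst hz
          simp only [Set.mem_insert_iff, true_or, true_iff]
          exact Or.inr ⟨Set.mem_insert _ _, hcond⟩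
        · simp only [Set.mem_insert_iff, hz, false_or, MSet_mem_iff_of_ne hz]
      have hlow : IsLowerSet (insert x (MSet e Q A)) := by
        rw [hsub]; exact MSet_lower e (insert_lower hQ hpre) A
      rw [togFun_insert hxM hlow]
      exact Subtype.ext hsub
    · -- insertion fails
      push_neg at hcond
      obtain ⟨a, ha, hae, hax⟩ := hcond
      have hne : a ≠ x := by
        rintro rfl; exact hin ⟨a, ha, le_rfl⟩
      have haQ : a ∈ Q := hpre a (lt_of_le_of_ne hax hne)
      have haM : a ∉ MSet e Q A := by
        intro h
        rcases h with ⟨hnQ, _⟩ | ⟨_, hall⟩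
        · exact hnQ haQ
        · exact hall a ha hae le_rfl
      have hnl : ¬ IsLowerSet (insert x (MSet e Q A)) := by
        intro hl
        have := hl hax (Set.mem_insert x _)
        rcases this with h | h
        · exact hne h
        · exact haM h
      rw [togFun_insert_fail hxM hnl]
      refine Subtype.ext ?_
      ext z
      by_cases hz : z = x
      · subst hz
        constructor
        · intro h; exact absurd h hxM
        · intro h
          rcases h with ⟨hnQ, _⟩ | ⟨_, hall⟩
          · exact absurd (Set.mem_insert _ _) hnQ
          · exact absurd (hall a ha hae hax) (by simp)
      · exact (MSet_mem_iff_of_ne hz).symm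

end Aux
section Aux2

variable {P : Type*} [PartialOrder P]

theorem S_lower (e : P) : IsLowerSet {x : P | x < e} :=
  fun _a _b hba ha => lt_of_le_of_lt hba ha

/-- Toggling at `e` on the intermediate ideal corresponds to the antichain toggle. -/
theorem tog_e (e : P) (A : AntichainSub P) :
    togFun e (⟨MSet e {x : P | x < e} A, MSet_lower e (S_lower e) A⟩ : OrderIdealSub P)
      = ⟨MSet e {x : P | x < e} (atogFun e A),
          MSet_lower e (S_lower e) (atogFun e A)⟩ := by
  have heS : e ∉ {x : P | x < e} := lt_irrefl e
  by_cases he : e ∈ A.1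
  · -- e ∈ A : remove it
    have heM : e ∈ MSet e {x : P | x < e} A := Or.inl ⟨heS, e, he, le_rfl⟩
    have hA' : atogFun e A = ⟨A.1 \ {e}, A.2.subset Set.diff_subset⟩ := by
      unfold atogFun; rw [dif_pos he]
    have hsub : MSet e {x : P | x < e} A \ {e}
        = MSet e {x : P | x < e} (⟨A.1 \ {e}, A.2.subset Set.diff_subset⟩ : AntichainSub P) := by
      ext z
      constructor
      · rintro ⟨hz, hze⟩
        rcases hz with ⟨hnS, a, ha, hza⟩ | ⟨hS, hall⟩
        · left
          refine ⟨hnS, a, ⟨ha, ?_⟩, hza⟩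
          rintro rfl
          have : z = a := le_antisymm hza (by
            by_contra h
            exact hnS (lt_of_le_of_ne hza (fun hh => hze (Set.mem_singleton_iff.mpr hh))))
          exact hze (Set.mem_singleton_iff.mpr this)
        · exact Or.inr ⟨hS, fun a ha hae haz => hall a ha.1 hae haz⟩
      · intro hz
        rcases hz with ⟨hnS, a, ha, hza⟩ | ⟨hS, hall⟩
        · refine ⟨Or.inl ⟨hnS, a, ha.1, hza⟩, ?_⟩
          intro hzz
          rw [Set.mem_singleton_iff] at hzz
          subst hzz
          exact A.2 he ha.1 (fun h => ha.2 (Set.mem_singleton_iff.mpr h.symm)) hza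
        · refine ⟨Or.inr ⟨hS, fun a ha hae haz => hall a ⟨ha, fun hh =>
            absurd (Set.mem_singleton_iff.mp hh ▸ hae) (lt_irrefl e)⟩ hae haz⟩, ?_⟩
          intro hzz
          rw [Set.mem_singleton_iff] at hzz
          exact heS (hzz ▸ hS)
    have hlow : IsLowerSet (MSet e {x : P | x < e} A \ {e}) := by
      rw [hsub]; exact MSet_lower e (S_lower e) _
    rw [togFun_remove heM hlow, hA']
    exact Subtype.ext hsub
  · by_cases h2 : IsAntichain (· ≤ ·) (insert e A.1)
    · -- insert e
      have hA' : atogFun e A = ⟨insert e A.1, h2⟩ := by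
        unfold atogFun; rw [dif_neg he, dif_pos h2]
      have hnc : ∀ a ∈ A.1, ¬ a ≤ e ∧ ¬ e ≤ a := by
        intro a ha
        have hne : e ≠ a := fun h => he (h ▸ ha)
        exact ⟨fun hle => h2 (Set.mem_insert_of_mem _ ha) (Set.mem_insert _ _)
            hne.symm hle,
          fun hle => h2 (Set.mem_insert _ _) (Set.mem_insert_of_mem _ ha) hne hle⟩
      have heM : e ∉ MSet e {x : P | x < e} A := by
        intro h
        rcases h with ⟨_, a, ha, hea⟩ | ⟨hS, _⟩
        · exact (hnc a ha).2 hea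
        · exact heS hS
      have hsub : insert e (MSet e {x : P | x < e} A)
          = MSet e {x : P | x < e} (⟨insert e A.1, h2⟩ : AntichainSub P) := by
        ext z
        constructor
        · intro hz
          rcases hz with rfl | hz
          · exact Or.inl ⟨heS, z, Set.mem_insert _ _, le_rfl⟩
          · rcases hz with ⟨hnS, a, ha, hza⟩ | ⟨hS, hall⟩
            · exact Or.inl ⟨hnS, a, Set.mem_insert_of_mem _ ha, hza⟩
            · exact Or.inr ⟨hS, fun a ha hae haz => by
                rcases ha with rfl | ha
                · exact absurd hae (lt_irrefl a)
                · exact hall a ha hae haz⟩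
        · intro hz
          rcases hz with ⟨hnS, a, ha, hza⟩ | ⟨hS, hall⟩
          · rcases Set.mem_insert_iff.mp ha with h | ha'
            · have hz : z = e := (eq_or_lt_of_le (h ▸ hza)).resolve_right hnS
              rw [hz]; exact Set.mem_insert _ _
            · exact Set.mem_insert_of_mem _ (Or.inl ⟨hnS, a, ha', hza⟩)
          · exact Set.mem_insert_of_mem _ (Or.inr ⟨hS, fun a ha hae haz =>
              hall a (Set.mem_insert_of_mem _ ha) hae haz⟩)
      have hlow : IsLowerSet (insert e (MSet e {x : P | x < e} A)) := by
        rw [hsub]; exact MSet_lower e (S_lower e) _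
      rw [togFun_insert heM hlow, hA']
      exact Subtype.ext hsub
    · -- toggle does nothing
      have hA' : atogFun e A = A := by
        unfold atogFun; rw [dif_neg he, dif_neg h2]
      rw [hA']
      have hex : ∃ a ∈ A.1, a ≠ e ∧ (a ≤ e ∨ e ≤ a) := by
        by_contra hno
        push_neg at hno
        apply h2
        intro u hu v hv hne hle
        rcases Set.mem_insert_iff.mp hu with hu' | hu'
        · rcases Set.mem_insert_iff.mp hv with hv' | hv'
          · exact hne (hu'.trans hv'.symm)
          · exact (hno v hv' (fun h => he (h ▸ hv'))).2 (hu' ▸ hle)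
        · rcases Set.mem_insert_iff.mp hv with hv' | hv'
          · exact (hno u hu' (fun h => he (h ▸ hu'))).1 (hv' ▸ hle)
          · exact A.2 hu' hv' hne hle
      obtain ⟨a, ha, hane, hcmp⟩ := hex
      rcases hcmp with hae | hea
      · -- a < e : insertion of e fails
        have hae' : a < e := lt_of_le_of_ne hae hane
        have heM : e ∉ MSet e {x : P | x < e} A := by
          intro hm
          rcases hm with ⟨_, b, hb, heb⟩ | ⟨hS, _⟩
          · have hab : a ≤ b := hae.trans heb
            have : a = b := by
              by_contra hne2; exact A.2 ha hb hne2 hab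
            subst this
            exact hane (le_antisymm hae heb)
          · exact heS hS
        have haM : a ∉ insert e (MSet e {x : P | x < e} A) := by
          intro h
          rcases h with rfl | h
          · exact hane rfl
          · rcases h with ⟨hnS, _⟩ | ⟨_, hall⟩
            · exact hnS hae'
            · exact hall a ha hae' le_rfl
        have hnl : ¬ IsLowerSet (insert e (MSet e {x : P | x < e} A)) :=
          fun hl => haM (hl hae (Set.mem_insert e _))
        rw [togFun_insert_fail heM hnl]
      · -- e < a : removal of e fails
        have heM : e ∈ MSet e {x : P | x < e} A := Or.inl ⟨heS, a, ha, hea⟩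
        have hanS : a ∉ {x : P | x < e} := fun h =>
          hane (le_antisymm (le_of_lt h) hea)
        have haM : a ∈ MSet e {x : P | x < e} A \ {e} :=
          ⟨Or.inl ⟨hanS, a, ha, le_rfl⟩, fun h => hane (Set.mem_singleton_iff.mp h)⟩
        have hnl : ¬ IsLowerSet (MSet e {x : P | x < e} A \ {e}) :=
          fun hl => (hl hea haM).2 rfl
        rw [togFun_remove_fail heM hnl]

end Aux2
section Aux3

variable {P : Type*} [PartialOrder P]

theorem togPerm_apply (x : P) (I : OrderIdealSub P) : togPerm x I = togFun x I := rfl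

theorem eta_fold (e : P) (A : AntichainSub P) :
    ∀ (l : List P) (Q : Set P) (hQ : IsLowerSet Q)
      (hQl : IsLowerSet (Q ∪ {a | a ∈ l})),
      (∀ x ∈ l, x ∉ Q) → (∀ x ∈ l, x < e) →
      (∀ x ∈ l, ∀ y, y < x → y ∈ Q ∨ y ∈ l) →
      l.Pairwise (fun a b => ¬ b < a) → l.Nodup →
      etaJPerm l (⟨MSet e (Q ∪ {a | a ∈ l}) A, MSet_lower e hQl A⟩ : OrderIdealSub P)
        = ⟨MSet e Q A, MSet_lower e hQ A⟩ := by
  intro l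
  induction l with
  | nil =>
    intro Q hQ hQl _ _ _ _ _
    have hs : Q ∪ {a | a ∈ ([] : List P)} = Q := by
      ext z; simp
    have harg : (⟨MSet e (Q ∪ {a | a ∈ ([] : List P)}) A, MSet_lower e hQl A⟩ :
        OrderIdealSub P) = ⟨MSet e Q A, MSet_lower e hQ A⟩ :=
      Subtype.ext (show MSet e (Q ∪ {a | a ∈ ([] : List P)}) A = MSet e Q A by rw [hs])
    rw [harg]
    simp [etaJPerm]
  | cons x t ih =>
    intro Q hQ hQl hdisj hlt hpre hpw hnd
    have hxmem : x ∈ x :: t := List.mem_cons_self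
    have hxQ : x ∉ Q := hdisj x hxmem
    have hxe : x < e := hlt x hxmem
    have hpwc := List.pairwise_cons.mp hpw
    have hndc := List.nodup_cons.mp hnd
    have hxpre : ∀ y, y < x → y ∈ Q := by
      intro y hy
      rcases hpre x hxmem y hy with h | h
      · exact h
      · rcases List.mem_cons.mp h with rfl | h'
        · exact absurd hy (lt_irrefl y)
        · exact absurd hy (hpwc.1 y h')
    have hQ1 : IsLowerSet (insert x Q) := insert_lower hQ hxpre
    have hsets : Q ∪ {a | a ∈ x :: t} = insert x Q ∪ {a | a ∈ t} := by
      ext z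
      simp [List.mem_cons, Set.mem_insert_iff]
      tauto
    have hQl1 : IsLowerSet (insert x Q ∪ {a | a ∈ t}) := hsets ▸ hQl
    have iht := ih (insert x Q) hQ1 hQl1
      (fun z hz hzQ => by
        rcases Set.mem_insert_iff.mp hzQ with h | h
        · exact hndc.1 (h ▸ hz)
        · exact hdisj z (List.mem_cons_of_mem _ hz) h)
      (fun z hz => hlt z (List.mem_cons_of_mem _ hz))
      (fun z hz y hy => by
        rcases hpre z (List.mem_cons_of_mem _ hz) y hy with h | h
        · exact Or.inl (Set.mem_insert_of_mem _ h)
        · rcases List.mem_cons.mp h with rfl | h'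
          · exact Or.inl (Set.mem_insert _ _)
          · exact Or.inr h')
      hpwc.2 hndc.2
    have hexp : etaJPerm (x :: t) = togPerm x * etaJPerm t := by
      simp [etaJPerm]
    have harg : (⟨MSet e (Q ∪ {a | a ∈ x :: t}) A, MSet_lower e hQl A⟩ :
        OrderIdealSub P)
        = ⟨MSet e (insert x Q ∪ {a | a ∈ t}) A, MSet_lower e hQl1 A⟩ :=
      Subtype.ext (show MSet e (Q ∪ {a | a ∈ x :: t}) A
        = MSet e (insert x Q ∪ {a | a ∈ t}) A by rw [hsets])
    rw [hexp, Equiv.Perm.mul_apply, harg, iht, togPerm_apply]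
    have hstep := tog_step e x hQ A hxQ hxe hxpre
    have h2 : togFun x (⟨MSet e (insert x Q) A, MSet_lower e hQ1 A⟩ :
        OrderIdealSub P) = ⟨MSet e Q A, MSet_lower e hQ A⟩ := by
      have h3 : (⟨MSet e (insert x Q) A, MSet_lower e hQ1 A⟩ : OrderIdealSub P)
          = togFun x ⟨MSet e Q A, MSet_lower e hQ A⟩ := hstep.symm
      rw [h3, togFun_involutive x]
    exact h2

end Aux3

/-- With `η_e` the composition of the order ideal toggles over a linear extension of
`{x ∈ P | x < e}` and `τ_e^* = η_e t_e η_e⁻¹`, the order ideal generated by `τ_e(A)`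
equals `τ_e^*` applied to the order ideal generated by `A`; i.e. `I ∘ τ_e = τ_e^* ∘ I`. -/
theorem ideal_of_atoggle_eq_tauStar_ideal
    (P : Type*) [PartialOrder P] [Fintype P] (e : P) (l : List P)
    (hl : IsLinExtListOn {x : P | x < e} l) (A : AntichainSub P) :
    idealOf (atogFun e A)
      = (etaJPerm l * togPerm e * (etaJPerm l)⁻¹) (idealOf A) := by
  have hS : IsLowerSet {x : P | x < e} := S_lower e
  have hunion : (∅ : Set P) ∪ {a | a ∈ l} = {x : P | x < e} := by
    ext z
    simp [hl.2.1 z]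
  have h0 : IsLowerSet (∅ : Set P) := fun _ _ _ h => h.elim
  have hQl : IsLowerSet ((∅ : Set P) ∪ {a | a ∈ l}) := hunion ▸ hS
  have hpw : l.Pairwise (fun a b => ¬ b < a) := by
    rw [List.pairwise_iff_get]
    intro i j hij hlt
    have h1 : (i : ℕ) < (j : ℕ) := hij
    have h2 : (j : ℕ) < (i : ℕ) := hl.2.2 j i hlt
    omega
  have hfold : ∀ B : AntichainSub P,
      etaJPerm l (⟨MSet e {x : P | x < e} B, MSet_lower e hS B⟩ : OrderIdealSub P)
        = idealOf B := by
    intro B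
    have harg : (⟨MSet e {x : P | x < e} B, MSet_lower e hS B⟩ : OrderIdealSub P)
        = ⟨MSet e ((∅ : Set P) ∪ {a | a ∈ l}) B, MSet_lower e hQl B⟩ :=
      Subtype.ext (show MSet e {x : P | x < e} B
        = MSet e ((∅ : Set P) ∪ {a | a ∈ l}) B by rw [hunion])
    have hfe := eta_fold e B l ∅ h0 hQl (by simp)
      (fun x hx => (hl.2.1 x).mp hx)
      (fun x hx y hy => Or.inr ((hl.2.1 y).mpr (hy.trans ((hl.2.1 x).mp hx))))
      hpw hl.1
    rw [harg, hfe]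
    exact Subtype.ext (by ext z; simp [MSet, idealOf])
  have h1 : (etaJPerm l)⁻¹ (idealOf A)
      = ⟨MSet e {x : P | x < e} A, MSet_lower e hS A⟩ := by
    rw [← hfold A]
    exact Equiv.symm_apply_apply _ _
  rw [Equiv.Perm.mul_apply, Equiv.Perm.mul_apply, h1, togPerm_apply, tog_e e A,
    hfold (atogFun e A)]
end

section
/- Let P be a finite poset with n elements and let (x_1, x_2, …, x_n) be any linear extension of P. Then antichain rowmotion satisfies Row_A = τ_{x_n} ∘ ⋯ ∘ τ_{x_2} ∘ τ_{x_1} (compositions applied right to left, so τ_{x_1} is applied first). -/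
open scoped Classical

variable {P : Type*} [PartialOrder P]

section AuxProof

variable {P : Type*} [PartialOrder P]

/-- The hybrid set: rowmotion image on `S`, original antichain off `S`. -/
def Bset (A : AntichainSub P) (S : Set P) : Set P := ((RowA A).1 ∩ S) ∪ (A.1 \ S)

lemma Bset_antichain (A : AntichainSub P) (S : Set P) (hS : IsLowerSet S) :
    IsAntichain (· ≤ ·) (Bset A S) := by
  intro a ha b hb hne hab
  rcases ha with ⟨haR, haS⟩ | ⟨haA, haS⟩
  · rcases hb with ⟨hbR, _⟩ | ⟨hbA, _⟩
    · exact (RowA A).2 haR hbR hne hab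
    · exact haR.1 ⟨b, hbA, hab⟩
  · rcases hb with ⟨_, hbS⟩ | ⟨hbA, _⟩
    · exact haS (hS hab hbS)
    · exact A.2 haA hbA hne hab

lemma lower_insert {S : Set P} (hS : IsLowerSet S) {e : P} (hcov : ∀ a, a < e → a ∈ S) :
    IsLowerSet (insert e S) := by
  intro a b hba ha
  rcases ha with rfl | ha
  · rcases eq_or_lt_of_le hba with rfl | h
    · exact Set.mem_insert _ _
    · exact Set.mem_insert_of_mem _ (hcov _ h)
  · exact Set.mem_insert_of_mem _ (hS hba ha)

lemma minimal_below [Fintype P] {I : Set P} (_hI : IsLowerSet I) {e : P} (he : e ∉ I) :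
    ∃ m, (m ∉ I ∧ ∀ z, z ∉ I → z ≤ m → z = m) ∧ m ≤ e := by
  obtain ⟨m, hme, hm⟩ := Finite.exists_le_minimal (p := fun z => z ∉ I) he
  refine ⟨m, ⟨hm.1, fun z hz hzm => ?_⟩, hme⟩
  exact le_antisymm hzm (hm.2 hz hzm)

lemma toggle_Bset [Fintype P] (A : AntichainSub P) (S : Set P) (hS : IsLowerSet S)
    (e : P) (heS : e ∉ S) (hcov : ∀ a, a < e → a ∈ S) :
    atogFun e ⟨Bset A S, Bset_antichain A S hS⟩ =
      ⟨Bset A (insert e S), Bset_antichain A (insert e S) (lower_insert hS hcov)⟩ := by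
  by_cases heA : e ∈ A.1
  · -- e ∈ A : it gets removed
    have heI : e ∈ (idealOf A).1 := ⟨e, heA, le_rfl⟩
    have heR : e ∉ (RowA A).1 := fun h => h.1 heI
    have heB : e ∈ Bset A S := Or.inr ⟨heA, heS⟩
    unfold atogFun
    rw [dif_pos heB]
    apply Subtype.ext
    show Bset A S \ {e} = Bset A (insert e S)
    ext x
    by_cases hx : x = e
    · subst hx
      simp only [Set.mem_diff, Set.mem_singleton_iff, not_true, and_false, false_iff]
      rintro (⟨hR, _⟩ | ⟨_, hS'⟩)
      · exact heR hR
      · exact hS' (Set.mem_insert _ _)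
    · simp only [Set.mem_diff, Set.mem_singleton_iff, hx, not_false_iff, and_true]
      constructor
      · rintro (⟨hR, hS'⟩ | ⟨hA, hS'⟩)
        · exact Or.inl ⟨hR, Set.mem_insert_of_mem _ hS'⟩
        · exact Or.inr ⟨hA, fun h => hS' (h.resolve_left hx)⟩
      · rintro (⟨hR, hS'⟩ | ⟨hA, hS'⟩)
        · exact Or.inl ⟨hR, hS'.resolve_left hx⟩
        · exact Or.inr ⟨hA, fun h => hS' (Set.mem_insert_of_mem _ h)⟩
  · -- e ∉ A
    have heB : e ∉ Bset A S := by
      rintro (⟨_, hS'⟩ | ⟨hA, _⟩)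
      · exact heS hS'
      · exact heA hA
    by_cases heR : e ∈ (RowA A).1
    · -- e becomes a minimal element of the complement: it gets added
      have hset : insert e (Bset A S) = Bset A (insert e S) := by
        ext x
        by_cases hx : x = e
        · subst hx
          simp only [Set.mem_insert_iff, true_or, true_iff]
          exact Or.inl ⟨heR, Set.mem_insert _ _⟩
        · simp only [Set.mem_insert_iff, hx, false_or]
          constructor
          · rintro (⟨hR, hS'⟩ | ⟨hA, hS'⟩)
            · exact Or.inl ⟨hR, Set.mem_insert_of_mem _ hS'⟩
            · exact Or.inr ⟨hA, fun h => hS' (h.resolve_left hx)⟩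
          · rintro (⟨hR, hS'⟩ | ⟨hA, hS'⟩)
            · exact Or.inl ⟨hR, hS'.resolve_left hx⟩
            · exact Or.inr ⟨hA, fun h => hS' (Set.mem_insert_of_mem _ h)⟩
      have hanti : IsAntichain (· ≤ ·) (insert e (Bset A S)) := by
        rw [hset]; exact Bset_antichain A _ (lower_insert hS hcov)
      unfold atogFun
      rw [dif_neg heB, dif_pos hanti]
      exact Subtype.ext hset
    · -- e is neither in A nor minimal in the complement: nothing happens
      have hnot : ¬ IsAntichain (· ≤ ·) (insert e (Bset A S)) := by
        by_cases heI : e ∈ (idealOf A).1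
        · obtain ⟨y, hyA, hey⟩ := heI
          have hne : e ≠ y := fun h => heA (h ▸ hyA)
          have hyS : y ∉ S := fun hy => heS (hS hey hy)
          intro hanti
          exact hanti (Set.mem_insert _ _)
            (Set.mem_insert_of_mem _ (Or.inr ⟨hyA, hyS⟩)) hne hey
        · obtain ⟨m, hm, hme⟩ := minimal_below (idealOf A).2 heI
          have hmR : m ∈ (RowA A).1 := hm
          have hmne : m ≠ e := by
            rintro rfl; exact heR hmR
          have hmlt : m < e := lt_of_le_of_ne hme hmne
          have hmS : m ∈ S := hcov m hmlt
          intro hanti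
          exact hanti (Set.mem_insert_of_mem _ (Or.inl ⟨hmR, hmS⟩))
            (Set.mem_insert _ _) hmne hme
      have hset : Bset A S = Bset A (insert e S) := by
        ext x
        by_cases hx : x = e
        · subst hx
          simp only [heB, false_iff]
          rintro (⟨hR, _⟩ | ⟨hA, _⟩)
          · exact heR hR
          · exact heA hA
        · constructor
          · rintro (⟨hR, hS'⟩ | ⟨hA, hS'⟩)
            · exact Or.inl ⟨hR, Set.mem_insert_of_mem _ hS'⟩
            · exact Or.inr ⟨hA, fun h => hS' (h.resolve_left hx)⟩
          · rintro (⟨hR, hS'⟩ | ⟨hA, hS'⟩)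
            · exact Or.inl ⟨hR, hS'.resolve_left hx⟩
            · exact Or.inr ⟨hA, fun h => hS' (Set.mem_insert_of_mem _ h)⟩
      unfold atogFun
      rw [dif_neg heB, dif_neg hnot]
      exact Subtype.ext hset

end AuxProof

/-- Antichain rowmotion is the composition of all the antichain toggles,
in the reverse order of any linear extension (the toggle of the first element of the
linear extension is applied first). -/
theorem antichain_rowmotion_eq_comp_toggles
    (P : Type*) [PartialOrder P] [Fintype P]
    (l : List P) (hl : IsLinExtListOn Set.univ l) :
    RowA (P := P) = listComp (l.reverse.map atogFun) := by
  obtain ⟨hnd, hmem, hord⟩ := hl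
  -- index of an element / uniqueness facts
  have hmem' : ∀ x : P, x ∈ l := fun x => (hmem x).mpr (Set.mem_univ x)
  have hTake : ∀ (k : ℕ) (i : ℕ) (hi : i < l.length), l[i] ∈ l.take k ↔ i < k := by
    intro k i hi
    rw [List.mem_take_iff_getElem]
    constructor
    · rintro ⟨j, hj, hji⟩
      have : j = i := (hnd.getElem_inj_iff).mp hji
      omega
    · intro hik
      exact ⟨i, by omega, rfl⟩
  have hord' : ∀ (i j : ℕ) (hi : i < l.length) (hj : j < l.length),
      l[i] < l[j] → i < j := fun i j hi hj h => hord ⟨i, hi⟩ ⟨j, hj⟩ h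
  have hidx : ∀ x : P, ∃ i : ℕ, ∃ hi : i < l.length, l[i] = x := by
    intro x
    obtain ⟨i, hi⟩ := List.mem_iff_get.mp (hmem' x)
    exact ⟨i, i.2, hi⟩
  have hSlow : ∀ k : ℕ, IsLowerSet {x : P | x ∈ l.take k} := by
    intro k a b hba ha
    rcases eq_or_lt_of_le hba with rfl | hlt
    · exact ha
    · obtain ⟨i, hi, hia⟩ := hidx a
      obtain ⟨j, hj, hjb⟩ := hidx b
      subst hia hjb
      have hij : j < i := hord' j i hj hi hlt
      have hik : i < k := (hTake k i hi).mp ha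
      exact (hTake k j hj).mpr (by omega)
  funext A
  have key : ∀ k : ℕ, k ≤ l.length →
      (listComp ((l.take k).reverse.map atogFun) A).1 = Bset A {x : P | x ∈ l.take k} := by
    intro k
    induction k with
    | zero =>
      intro _
      simp only [List.take_zero, List.reverse_nil, List.map_nil]
      show A.1 = Bset A {x : P | x ∈ ([] : List P)}
      ext x
      simp [Bset]
    | succ k ih =>
      intro hk1
      have hk : k < l.length := hk1
      have hkk : k ≤ l.length := le_of_lt hk
      have ih' := ih hkk
      set e : P := l[k] with he
      have htk : l.take (k + 1) = l.take k ++ [e] := by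
        rw [List.take_succ, List.getElem?_eq_getElem hk]
        rfl
      have hrev : (l.take (k + 1)).reverse.map atogFun =
          atogFun e :: ((l.take k).reverse.map atogFun) := by
        rw [htk, List.reverse_append]
        rfl
      have heS : e ∉ {x : P | x ∈ l.take k} := by
        intro h
        have := (hTake k k hk).mp h
        omega
      have hcov : ∀ a : P, a < e → a ∈ {x : P | x ∈ l.take k} := by
        intro a ha
        obtain ⟨i, hi, hia⟩ := hidx a
        subst hia
        exact (hTake k i hi).mpr (hord' i k hi hk ha)
      have hstep := toggle_Bset A {x : P | x ∈ l.take k} (hSlow k) e heS hcov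
      have hprev : listComp ((l.take k).reverse.map atogFun) A =
          ⟨Bset A {x : P | x ∈ l.take k}, Bset_antichain A _ (hSlow k)⟩ :=
        Subtype.ext ih'
      rw [hrev]
      show (atogFun e (listComp ((l.take k).reverse.map atogFun) A)).1 = _
      rw [hprev, hstep]
      show Bset A (insert e {x : P | x ∈ l.take k}) = Bset A {x : P | x ∈ l.take (k + 1)}
      have hset : insert e {x : P | x ∈ l.take k} = {x : P | x ∈ l.take (k + 1)} := by
        ext x
        simp only [Set.mem_insert_iff, Set.mem_setOf_eq, htk, List.mem_append,
          List.mem_singleton]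
        tauto
      rw [hset]
  have hfin := key l.length le_rfl
  rw [List.take_length] at hfin
  apply Subtype.ext
  rw [hfin]
  show (RowA A).1 = _
  ext x
  simp [Bset, hmem' x]
end

section
/- Let P be a finite graded poset of rank r. Then Row_J = t_{rk=0} ∘ t_{rk=1} ∘ ⋯ ∘ t_{rk=r} and Row_A = τ_{rk=r} ∘ ⋯ ∘ τ_{rk=1} ∘ τ_{rk=0}, where compositions are applied right to left. -/
open scoped Classical

variable {P : Type*} [PartialOrder P]

section AuxLemmas

variable {P : Type*} [PartialOrder P]

lemma listComp_cons {α : Type*} (f : α → α) (fs : List (α → α)) :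
    listComp (f :: fs) = f ∘ listComp fs := rfl

lemma listComp_append {α : Type*} (fs gs : List (α → α)) :
    listComp (fs ++ gs) = listComp fs ∘ listComp gs := by
  induction fs with
  | nil => rfl
  | cons f t ih =>
    show f ∘ listComp (t ++ gs) = (f ∘ listComp t) ∘ listComp gs
    rw [ih]; rfl

lemma listComp_map_flatten {α β : Type*} (f : β → α → α) (lss : List (List β)) :
    listComp (lss.map fun s => listComp (s.map f)) = listComp (lss.flatten.map f) := by
  induction lss with
  | nil => rfl
  | cons s rest ih =>
    simp only [List.map_cons, List.flatten_cons, List.map_append, listComp_append,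
      listComp_cons, ih]

lemma listComp_map_eq_foldl {α β : Type*} (f : β → α → α) (l : List β) (a : α) :
    listComp (l.map f) a = l.reverse.foldl (fun x e => f e x) a := by
  induction l generalizing a with
  | nil => rfl
  | cons x t ih =>
    rw [List.reverse_cons, List.foldl_append]
    show f x (listComp (t.map f) a) = _
    rw [ih]
    rfl

lemma mem_togFun_of_ne {x y : P} (hne : y ≠ x) (J : OrderIdealSub P) :
    y ∈ (togFun x J).1 ↔ y ∈ J.1 := by
  unfold togFun
  split_ifs <;>
    simp [Set.mem_insert_iff, Set.mem_diff, Set.mem_singleton_iff, hne]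

lemma mem_atogFun_of_ne {x y : P} (hne : y ≠ x) (B : AntichainSub P) :
    y ∈ (atogFun x B).1 ↔ y ∈ B.1 := by
  unfold atogFun
  split_ifs <;>
    simp [Set.mem_insert_iff, Set.mem_diff, Set.mem_singleton_iff, hne]

lemma mem_RowJ {I : OrderIdealSub P} {x : P} :
    x ∈ (RowJ I).1 ↔ ∃ m, (m ∉ I.1 ∧ ∀ z, z ∉ I.1 → z ≤ m → z = m) ∧ x ≤ m :=
  Iff.rfl

lemma mem_RowA {A : AntichainSub P} {x : P} :
    x ∈ (RowA A).1 ↔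
      x ∉ (idealOf A).1 ∧ ∀ z, z ∉ (idealOf A).1 → z ≤ x → z = x :=
  Iff.rfl

lemma exists_min_below [Fintype P] {S : Set P} {z : P} (hz : z ∈ S) :
    ∃ m, m ∈ S ∧ m ≤ z ∧ ∀ w, w ∈ S → w ≤ m → w = m := by
  obtain ⟨m, ⟨hmS, hmz⟩, hmin⟩ :=
    (wellFounded_lt (α := P)).has_min {w | w ∈ S ∧ w ≤ z} ⟨z, hz, le_refl z⟩
  refine ⟨m, hmS, hmz, fun w hwS hwm => ?_⟩
  by_contra hne
  exact hmin w ⟨hwS, hwm.trans hmz⟩ (lt_of_le_of_ne hwm hne)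

lemma rowJ_foldl (I : OrderIdealSub P) :
    ∀ (p : List P) (J : OrderIdealSub P),
      p.Nodup →
      p.Pairwise (fun a b => ¬ a < b) →
      (∀ b ∈ p, ∀ a, a ≤ b → a ∈ p) →
      (∀ y ∈ p, (y ∈ J.1 ↔ y ∈ I.1)) →
      (∀ y, y ∉ p → (y ∈ J.1 ↔ y ∈ (RowJ I).1)) →
      p.foldl (fun K e => togFun e K) J = RowJ I := by
  intro p
  induction p with
  | nil =>
    intro J _ _ _ _ hout
    apply Subtype.ext
    ext y
    exact hout y (List.not_mem_nil)
  | cons x q ih =>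
    intro J hnd hpw hlow hinJ houtJ
    rw [List.foldl_cons]
    have hxq : x ∉ q := (List.nodup_cons.mp hnd).1
    have hhead : ∀ b ∈ q, ¬ x < b := (List.pairwise_cons.mp hpw).1
    have habove : ∀ y, x < y → y ∉ x :: q := by
      intro y hy hmem
      rcases List.mem_cons.mp hmem with h | h
      · exact absurd (h ▸ hy) (lt_irrefl x)
      · exact hhead y h hy
    have hxI : x ∈ J.1 ↔ x ∈ I.1 := hinJ x (List.mem_cons_self)
    have hBelow : ∀ z, z ≤ x → (z ∈ J.1 ↔ z ∈ I.1) := fun z hz =>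
      hinJ z (hlow x (List.mem_cons_self) z hz)
    have hAbove : ∀ y, x < y → (y ∈ J.1 ↔ y ∈ (RowJ I).1) := fun y hy =>
      houtJ y (habove y hy)
    -- key step: membership of x after the toggle
    have hxkey : x ∈ (togFun x J).1 ↔ x ∈ (RowJ I).1 := by
      unfold togFun
      by_cases hxJ : x ∈ J.1
      · rw [dif_pos hxJ]
        by_cases hls : IsLowerSet (J.1 \ {x})
        · rw [dif_pos hls]
          constructor
          · intro h
            exact absurd rfl h.2
          · rintro ⟨m, ⟨hmI, hmmin⟩, hxm⟩
            have hxI' : x ∈ I.1 := hxI.mp hxJ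
            have hne : x ≠ m := fun h => hmI (h ▸ hxI')
            have hlt : x < m := lt_of_le_of_ne hxm hne
            have hmR : m ∈ (RowJ I).1 := ⟨m, ⟨hmI, hmmin⟩, le_refl m⟩
            have hmJ : m ∈ J.1 := (hAbove m hlt).mpr hmR
            have : x ∈ J.1 \ {x} := hls hxm ⟨hmJ, fun h => hne h.symm⟩
            exact absurd rfl this.2
        · rw [dif_neg hls]
          constructor
          · intro _
            simp only [IsLowerSet] at hls
            push_neg at hls
            obtain ⟨a, b, hba, haJ, hbnot⟩ := hls
            have hbJ : b ∈ J.1 := J.2 hba haJ.1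
            have hbx : b = x := by
              by_contra h
              exact hbnot ⟨hbJ, h⟩
            subst hbx
            have hba' : b < a := lt_of_le_of_ne hba (fun h => haJ.2 h.symm)
            obtain ⟨m, hm, ham⟩ := (hAbove a hba').mp haJ.1
            exact ⟨m, hm, (le_of_lt hba').trans ham⟩
          · intro _; exact hxJ
      · rw [dif_neg hxJ]
        by_cases hls : IsLowerSet (insert x J.1)
        · rw [dif_pos hls]
          constructor
          · intro _
            refine ⟨x, ⟨fun h => hxJ (hxI.mpr h), ?_⟩, le_refl x⟩
            intro z hzI hzx
            by_contra hne
            have hzx' : z < x := lt_of_le_of_ne hzx hne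
            have : z ∈ insert x J.1 := hls hzx (Set.mem_insert x _)
            rcases this with h | h
            · exact hne h
            · exact hzI ((hBelow z (le_of_lt hzx')).mp h)
          · intro _; exact Set.mem_insert x _
        · rw [dif_neg hls]
          constructor
          · intro h; exact absurd h hxJ
          · rintro ⟨m, ⟨hmI, hmmin⟩, hxm⟩
            exfalso
            apply hls
            intro a b hba ha
            rcases ha with ha | ha
            · rw [ha] at hba
              by_cases hbx : b = x
              · rw [hbx]; exact Set.mem_insert x _
              · have hblt : b < x := lt_of_le_of_ne hba hbx
                have hbI : b ∈ I.1 := by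
                  by_contra hbI
                  have hbm := hmmin b hbI (hba.trans hxm)
                  rw [hbm] at hblt
                  exact absurd (hblt.trans_le hxm) (lt_irrefl m)
                exact Set.mem_insert_of_mem _ ((hBelow b (le_of_lt hblt)).mpr hbI)
            · exact Set.mem_insert_of_mem _ (J.2 hba ha)
    -- apply the induction hypothesis
    apply ih (togFun x J)
    · exact (List.nodup_cons.mp hnd).2
    · exact (List.pairwise_cons.mp hpw).2
    · intro b hb a hab
      have : a ∈ x :: q := hlow b (List.mem_cons_of_mem x hb) a hab
      rcases List.mem_cons.mp this with h | h
      · subst h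
        exfalso
        rcases eq_or_lt_of_le hab with h | h
        · exact hxq (h ▸ hb)
        · exact hhead b hb h
      · exact h
    · intro y hy
      have hyx : y ≠ x := fun h => hxq (h ▸ hy)
      rw [mem_togFun_of_ne hyx]
      exact hinJ y (List.mem_cons_of_mem x hy)
    · intro y hy
      by_cases hyx : y = x
      · exact hyx ▸ hxkey
      · rw [mem_togFun_of_ne hyx]
        exact houtJ y (fun h => by
          rcases List.mem_cons.mp h with h | h
          · exact hyx h
          · exact hy h)

lemma rowA_foldl [Fintype P] (A : AntichainSub P) :
    ∀ (p : List P) (B : AntichainSub P),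
      p.Nodup →
      p.Pairwise (fun a b => ¬ b < a) →
      (∀ b ∈ p, ∀ a, b ≤ a → a ∈ p) →
      (∀ y ∈ p, (y ∈ B.1 ↔ y ∈ A.1)) →
      (∀ y, y ∉ p → (y ∈ B.1 ↔ y ∈ (RowA A).1)) →
      p.foldl (fun K e => atogFun e K) B = RowA A := by
  intro p
  induction p with
  | nil =>
    intro B _ _ _ _ hout
    apply Subtype.ext
    ext y
    exact hout y (List.not_mem_nil)
  | cons x q ih =>
    intro B hnd hpw hup hinB houtB
    rw [List.foldl_cons]
    have hxq : x ∉ q := (List.nodup_cons.mp hnd).1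
    have hhead : ∀ b ∈ q, ¬ b < x := (List.pairwise_cons.mp hpw).1
    have hbelow : ∀ y, y < x → y ∉ x :: q := by
      intro y hy hmem
      rcases List.mem_cons.mp hmem with h | h
      · exact absurd (h ▸ hy) (lt_irrefl x)
      · exact hhead y h hy
    have hxA : x ∈ B.1 ↔ x ∈ A.1 := hinB x (List.mem_cons_self)
    have hAbove : ∀ a, x ≤ a → (a ∈ B.1 ↔ a ∈ A.1) := fun a ha =>
      hinB a (hup x (List.mem_cons_self) a ha)
    have hBelow : ∀ y, y < x → (y ∈ B.1 ↔ y ∈ (RowA A).1) := fun y hy =>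
      houtB y (hbelow y hy)
    have hxkey : x ∈ (atogFun x B).1 ↔ x ∈ (RowA A).1 := by
      unfold atogFun
      by_cases hxB : x ∈ B.1
      · rw [dif_pos hxB]
        constructor
        · intro h; exact absurd rfl h.2
        · rintro ⟨hxnI, -⟩
          exact absurd ⟨x, hxA.mp hxB, le_refl x⟩ hxnI
      · rw [dif_neg hxB]
        by_cases hac : IsAntichain (· ≤ ·) (insert x B.1)
        · rw [dif_pos hac]
          constructor
          · intro _
            constructor
            · rintro ⟨a, haA, hxa⟩
              have hne : x ≠ a := by
                rintro rfl
                exact hxB (hxA.mpr haA)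
              have haB : a ∈ B.1 := (hAbove a hxa).mpr haA
              exact hac (Set.mem_insert x _) (Set.mem_insert_of_mem _ haB) hne hxa
            · intro z hzI hzx
              by_contra hne
              have hzx' : z < x := lt_of_le_of_ne hzx hne
              obtain ⟨m, hmS, hmz, hmmin⟩ := exists_min_below (S := {w | w ∉ (idealOf A).1}) hzI
              have hmR : m ∈ (RowA A).1 := ⟨hmS, fun w hw hwm => hmmin w hw hwm⟩
              have hmx : m < x := lt_of_le_of_lt hmz hzx'
              have hmB : m ∈ B.1 := (hBelow m hmx).mpr hmR
              exact hac (Set.mem_insert_of_mem _ hmB) (Set.mem_insert x _)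
                (ne_of_lt hmx) (le_of_lt hmx)
          · intro _; exact Set.mem_insert x _
        · rw [dif_neg hac]
          constructor
          · intro h; exact absurd h hxB
          · rintro ⟨hxnI, hxmin⟩
            exfalso
            apply hac
            intro a ha b hb hne hab
            rcases ha with ha | ha <;> rcases hb with hb | hb
            · exact hne (ha.trans hb.symm)
            · -- a = x, b ∈ B
              subst ha
              have hbA : b ∈ A.1 := (hAbove b hab).mp hb
              exact hxnI ⟨b, hbA, hab⟩
            · -- a ∈ B, b = x
              subst hb
              have halt : a < b := lt_of_le_of_ne hab hne
              have haR : a ∈ (RowA A).1 := (hBelow a halt).mp ha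
              exact hne (hxmin a haR.1 hab)
            · exact B.2 ha hb hne hab
    apply ih (atogFun x B)
    · exact (List.nodup_cons.mp hnd).2
    · exact (List.pairwise_cons.mp hpw).2
    · intro b hb a hab
      have : a ∈ x :: q := hup b (List.mem_cons_of_mem x hb) a hab
      rcases List.mem_cons.mp this with h | h
      · subst h
        exfalso
        rcases eq_or_lt_of_le hab with h | h
        · exact hxq (h ▸ hb)
        · exact hhead b hb h
      · exact h
    · intro y hy
      have hyx : y ≠ x := fun h => hxq (h ▸ hy)
      rw [mem_atogFun_of_ne hyx]
      exact hinB y (List.mem_cons_of_mem x hy)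
    · intro y hy
      by_cases hyx : y = x
      · exact hyx ▸ hxkey
      · rw [mem_atogFun_of_ne hyx]
        exact houtB y (fun h => by
          rcases List.mem_cons.mp h with h | h
          · exact hyx h
          · exact hy h)

lemma rk_lt_of_lt [Fintype P] (rk : P → ℕ)
    (hrkcov : ∀ x y : P, x ⋖ y → rk y = rk x + 1) :
    ∀ y x : P, x < y → rk x < rk y := by
  intro y
  induction y using WellFounded.induction (wellFounded_lt (α := P)) with
  | _ y IH =>
    intro x hxy
    obtain ⟨z, ⟨hxz, hzy⟩, hzmax⟩ :=
      (wellFounded_gt (α := P)).has_min {z | x ≤ z ∧ z < y} ⟨x, le_refl x, hxy⟩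
    have hcov : z ⋖ y := by
      refine ⟨hzy, fun c hzc hcy => ?_⟩
      exact hzmax c ⟨hxz.trans (le_of_lt hzc), hcy⟩ hzc
    have hrk : rk y = rk z + 1 := hrkcov z y hcov
    rcases eq_or_lt_of_le hxz with h | h
    · subst h; omega
    · have := IH z hzy x h
      omega

lemma rk_le_of_le [Fintype P] (rk : P → ℕ)
    (hrkcov : ∀ x y : P, x ⋖ y → rk y = rk x + 1)
    {x y : P} (h : x ≤ y) : rk x ≤ rk y := by
  rcases eq_or_lt_of_le h with h | h
  · exact h ▸ le_refl _
  · exact le_of_lt (rk_lt_of_lt rk hrkcov y x h)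

lemma rk_le_top [Fintype P] (rk : P → ℕ) (r : ℕ)
    (hrkcov : ∀ x y : P, x ⋖ y → rk y = rk x + 1)
    (hrkmax : ∀ x : P, IsMax x → rk x = r) (x : P) : rk x ≤ r := by
  obtain ⟨m, hxm, hmax⟩ :
      ∃ m : P, x ≤ m ∧ ∀ w, w ∈ {z : P | x ≤ z} → ¬ m < w :=
    let ⟨m, hm, hmin⟩ := (wellFounded_gt (α := P)).has_min {z : P | x ≤ z} ⟨x, le_refl x⟩
    ⟨m, hm, hmin⟩
  have hM : IsMax m := by
    intro w hmw
    by_contra h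
    exact hmax w (hxm.trans hmw) (lt_of_le_of_ne hmw (fun he => h (he ▸ le_refl m)))
  calc rk x ≤ rk m := rk_le_of_le rk hrkcov hxm
    _ = r := hrkmax m hM


lemma flatten_rank_nodup {P : Type*} [PartialOrder P] (rk : P → ℕ) (L : ℕ → List P)
    (hL : ∀ i, (L i).Nodup ∧ ∀ x : P, x ∈ L i ↔ rk x = i)
    (ns : List ℕ) (hns : ns.Pairwise (· ≠ ·)) : ((ns.map L).flatten).Nodup := by
  rw [List.nodup_flatten]
  constructor
  · intro s hs
    obtain ⟨i, -, rfl⟩ := List.mem_map.mp hs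
    exact (hL i).1
  · rw [List.pairwise_map]
    refine hns.imp ?_
    intro i j hij a hai haj
    exact hij (((hL i).2 a).mp hai ▸ ((hL j).2 a).mp haj)

lemma flatten_rank_pairwise {P : Type*} [PartialOrder P] (rk : P → ℕ) (L : ℕ → List P)
    (hL : ∀ i, (L i).Nodup ∧ ∀ x : P, x ∈ L i ↔ rk x = i)
    (Q : ℕ → ℕ → Prop) (hQ : ∀ i, Q i i) (ns : List ℕ) (hns : ns.Pairwise Q) :
    ((ns.map L).flatten).Pairwise (fun a b => Q (rk a) (rk b)) := by
  rw [List.pairwise_flatten]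
  constructor
  · intro s hs
    obtain ⟨i, -, rfl⟩ := List.mem_map.mp hs
    refine (hL i).1.pairwise_of_forall_ne ?_
    intro a ha b hb _
    rw [((hL i).2 a).mp ha, ((hL i).2 b).mp hb]
    exact hQ i
  · rw [List.pairwise_map]
    refine hns.imp ?_
    intro i j hij a hai b hbj
    rw [((hL i).2 a).mp hai, ((hL j).2 b).mp hbj]
    exact hij

lemma flatten_rank_mem {P : Type*} [PartialOrder P] (rk : P → ℕ) (L : ℕ → List P)
    (hL : ∀ i, (L i).Nodup ∧ ∀ x : P, x ∈ L i ↔ rk x = i)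
    (ns : List ℕ) (x : P) (hx : rk x ∈ ns) : x ∈ (ns.map L).flatten :=
  List.mem_flatten.mpr ⟨L (rk x), List.mem_map_of_mem (f := L) hx, ((hL (rk x)).2 x).mpr rfl⟩


end AuxLemmas

/-- For a finite graded poset of rank `r`, rowmotion on order ideals is
`t_{rk=0} ∘ t_{rk=1} ∘ ⋯ ∘ t_{rk=r}` and rowmotion on antichains is
`τ_{rk=r} ∘ ⋯ ∘ τ_{rk=1} ∘ τ_{rk=0}`, where the rank toggle for rank `i` is the
composition of the toggles of all elements of rank `i` (in any order; `L i`
enumerates the elements of rank `i`). -/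
theorem graded_rowmotion_eq_rank_toggles
    (P : Type*) [PartialOrder P] [Fintype P] (rk : P → ℕ) (r : ℕ)
    (hrk0 : ∀ x : P, IsMin x → rk x = 0)
    (hrkcov : ∀ x y : P, x ⋖ y → rk y = rk x + 1)
    (hrkmax : ∀ x : P, IsMax x → rk x = r)
    (L : ℕ → List P) (hL : ∀ i, (L i).Nodup ∧ ∀ x : P, x ∈ L i ↔ rk x = i) :
    RowJ (P := P)
        = listComp ((List.range (r + 1)).map fun i => listComp ((L i).map togFun)) ∧
    RowA (P := P)
        = listComp ((List.range (r + 1)).reverse.map fun i =>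
            listComp ((L i).map atogFun)) := by
  have hlt : ∀ y x : P, x < y → rk x < rk y := rk_lt_of_lt rk hrkcov
  have hler : ∀ x : P, rk x ≤ r := rk_le_top rk r hrkcov hrkmax
  constructor
  · funext I
    symm
    set l0 : List P := ((List.range (r + 1)).map L).flatten with hl0
    have hflat := listComp_map_flatten (togFun (P := P)) ((List.range (r + 1)).map L)
    rw [List.map_map] at hflat
    have hmemall : ∀ x : P, x ∈ l0 :=
      fun x => flatten_rank_mem rk L hL _ x (List.mem_range.mpr (Nat.lt_succ_of_le (hler x)))
    have hpw0 : l0.Pairwise (fun a b => rk a ≤ rk b) :=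
      flatten_rank_pairwise rk L hL (· ≤ ·) (fun i => le_refl i) _
        ((show (List.range (r + 1)).Pairwise (· < ·) from List.pairwise_lt_range).imp (fun h => le_of_lt h))
    calc listComp ((List.range (r + 1)).map fun i => listComp ((L i).map togFun)) I
        = listComp (l0.map togFun) I := congrFun hflat I
      _ = l0.reverse.foldl (fun K e => togFun e K) I := listComp_map_eq_foldl _ _ _
      _ = RowJ I := by
          apply rowJ_foldl I l0.reverse I
          · exact List.nodup_reverse.mpr
              (flatten_rank_nodup rk L hL _
                ((show (List.range (r + 1)).Pairwise (· < ·) from List.pairwise_lt_range).imp (fun h => Nat.ne_of_lt h)))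
          · rw [List.pairwise_reverse]
            refine hpw0.imp ?_
            intro a b hab hba
            exact absurd (hlt a b hba) (not_lt.mpr hab)
          · intro b _ a _
            exact List.mem_reverse.mpr (hmemall a)
          · intro y _
            exact Iff.rfl
          · intro y hy
            exact absurd (List.mem_reverse.mpr (hmemall y)) hy
  · funext A
    symm
    set l1 : List P := (((List.range (r + 1)).reverse).map L).flatten with hl1
    have hflat := listComp_map_flatten (atogFun (P := P)) (((List.range (r + 1)).reverse).map L)
    rw [List.map_map] at hflat
    have hmemall : ∀ x : P, x ∈ l1 :=
      fun x => flatten_rank_mem rk L hL _ x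
        (List.mem_reverse.mpr (List.mem_range.mpr (Nat.lt_succ_of_le (hler x))))
    have hpwrev : ((List.range (r + 1)).reverse).Pairwise (fun i j => j ≤ i) := by
      rw [List.pairwise_reverse]
      exact (show (List.range (r + 1)).Pairwise (· < ·) from List.pairwise_lt_range).imp (fun h => le_of_lt h)
    have hpw1 : l1.Pairwise (fun a b => rk b ≤ rk a) :=
      flatten_rank_pairwise rk L hL (fun i j => j ≤ i) (fun i => le_refl i) _ hpwrev
    calc listComp (((List.range (r + 1)).reverse).map fun i => listComp ((L i).map atogFun)) A
        = listComp (l1.map atogFun) A := congrFun hflat A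
      _ = l1.reverse.foldl (fun K e => atogFun e K) A := listComp_map_eq_foldl _ _ _
      _ = RowA A := by
          apply rowA_foldl A l1.reverse A
          · refine List.nodup_reverse.mpr (flatten_rank_nodup rk L hL _ ?_)
            rw [List.pairwise_reverse]
            exact (show (List.range (r + 1)).Pairwise (· < ·) from List.pairwise_lt_range).imp (fun h => (Nat.ne_of_lt h).symm)
          · rw [List.pairwise_reverse]
            refine hpw1.imp ?_
            intro a b hab hba
            exact absurd (hlt b a hba) (not_lt.mpr hab)
          · intro b _ a _
            exact List.mem_reverse.mpr (hmemall a)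
          · intro y _
            exact Iff.rfl
          · intro y hy
            exact absurd (List.mem_reverse.mpr (hmemall y)) hy
end
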